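/- arXiv:2105.01045 — 7 statements merged into one kernel-verified Lean document; each statement's English description precedes it below -/
import Mathlib

section
/- Let n ≥ 1 be an integer and let c > 1 and λ > 0 be real numbers. Let X_1, …, X_n be i.i.d. random variables taking values in the positive integers such that P(X_1 > x) ≤ c · e^(−λx) for every integer x ≥ 0. Then the expected difference run-length codeword length of the sample satisfies E[L(W)] ≤ (13·(2λ+1)·c/λ) · (log₂(n + 1))². -/
open MeasureTheory ProbabilityTheory
open scoped ENNReal NNReal

/-- The Elias gamma codeword length of a positive integer `m`:
`L_γ(m) = ⌊2·log₂ m + 1⌋`. -/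
noncomputable def eliasGammaLen (m : ℕ) : ℝ :=
  ((⌊2 * Real.logb 2 (m : ℝ) + 1⌋ : ℤ) : ℝ)

/-- The difference run-length codeword length of a sample `x : Fin n → ℕ` of
positive integers.  With `y` the (1-based) order statistics, `D 1 = y 1`,
`D i = y i - y (i-1)` for `i ∈ [2:n]`, `D i = 1` for `i > n` (the convention
`D_{n+1} = 1`), and `j i` the number of consecutive zeros of `D` starting at
index `i`, the length is
`L_γ(D 1) + ∑_{i ∈ U} (1 + L_γ(D i)) + ∑_{i ∈ V} (1 + L_γ(j i))` where
`U = {i ∈ [2:n] : D i > 0}` and `V = {i ∈ [2:n] : D i = 0, D (i-1) ≠ 0}`. -/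
noncomputable def drlLength (n : ℕ) (x : Fin n → ℕ) : ℝ :=
  -- `y i` is the `i`-th order statistic (1-based)
  let y : ℕ → ℕ := fun i => if h : i - 1 < n then x (Tuple.sort x ⟨i - 1, h⟩) else 0
  let D : ℕ → ℕ := fun i =>
    if i = 0 then 0
    else if i = 1 then y 1
    else if i ≤ n then y i - y (i - 1)
    else 1
  -- `j i` = number of consecutive zeros of `D` starting at index `i`
  let j : ℕ → ℕ := fun i =>
    ((Finset.range (n + 1)).filter fun k => ∀ l ≤ k, D (i + l) = 0).card
  eliasGammaLen (D 1) +
    ∑ i ∈ Finset.Icc 2 n,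
      (if 0 < D i then 1 + eliasGammaLen (D i)
       else if D (i - 1) ≠ 0 then 1 + eliasGammaLen (j i)
       else 0)

/-! ### Auxiliary lemmas -/

lemma eliasGammaLen_nonneg (m : ℕ) : 0 ≤ eliasGammaLen m := by
  unfold eliasGammaLen
  have h : (0:ℝ) ≤ 2 * Real.logb 2 (m:ℝ) + 1 := by
    rcases Nat.eq_zero_or_pos m with h | h
    · simp [h]
    · have : 0 ≤ Real.logb 2 (m:ℝ) := Real.logb_nonneg (by norm_num) (by exact_mod_cast h)
      linarith
  exact_mod_cast Int.floor_nonneg.mpr h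

lemma eliasGammaLen_le_linear {m : ℕ} (hm : 1 ≤ m) : eliasGammaLen m ≤ 2 * m - 1 := by
  unfold eliasGammaLen
  have h2 : (m:ℝ) ≤ 2 ^ (m - 1 : ℕ) := by
    have := Nat.lt_two_pow_self (n := m - 1)
    exact_mod_cast Nat.le_of_lt_succ (by omega : m < (2 ^ (m-1)) + 1)
  have h1 : Real.logb 2 (m:ℝ) ≤ (m : ℝ) - 1 := by
    have hlog : Real.log (m:ℝ) ≤ Real.log (2 ^ (m - 1 : ℕ)) :=
      Real.log_le_log (by exact_mod_cast hm) h2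
    rw [Real.log_pow] at hlog
    rw [Real.logb, div_le_iff₀ (Real.log_pos (by norm_num))]
    calc Real.log (m:ℝ) ≤ (m - 1 : ℕ) * Real.log 2 := hlog
      _ ≤ ((m:ℝ) - 1) * Real.log 2 := by
          have : ((m - 1 : ℕ) : ℝ) = (m:ℝ) - 1 := by
            push_cast [Nat.cast_sub hm]; ring
          rw [this]
  calc ((⌊2 * Real.logb 2 (m : ℝ) + 1⌋ : ℤ) : ℝ) ≤ 2 * Real.logb 2 (m:ℝ) + 1 := Int.floor_le _
    _ ≤ 2 * ((m:ℝ) - 1) + 1 := by linarith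
    _ = 2 * m - 1 := by ring

lemma eliasGammaLen_le_logb {m N : ℕ} (hm : m ≤ N) (hN : 1 ≤ N) :
    eliasGammaLen m ≤ 2 * Real.logb 2 N + 1 := by
  unfold eliasGammaLen
  refine (Int.floor_le _).trans ?_
  have hNlog : 0 ≤ Real.logb 2 (N:ℝ) := Real.logb_nonneg (by norm_num) (by exact_mod_cast hN)
  have : Real.logb 2 (m:ℝ) ≤ Real.logb 2 (N:ℝ) := by
    rcases Nat.eq_zero_or_pos m with h | h
    · simpa [h] using hNlog
    · exact Real.logb_le_logb_of_le (by norm_num) (by exact_mod_cast h) (by exact_mod_cast hm)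
  linarith

lemma telescope_nat (g : ℕ → ℕ) (hg : Monotone g) (m : ℕ) :
    g 0 + ∑ k ∈ Finset.range m, (g (k+1) - g k) = g m := by
  induction m with
  | zero => simp
  | succ m ih =>
      rw [Finset.sum_range_succ, ← Nat.add_assoc, ih,
        Nat.add_sub_cancel' (hg (Nat.le_succ m))]

lemma drl_core (n : ℕ) (hn : 1 ≤ n) (y D j : ℕ → ℕ) (M : ℕ) (L : ℝ)
    (hD1 : D 1 = y 1) (hD : ∀ i ∈ Finset.Icc 2 n, D i = y i - y (i-1))
    (hy1 : 1 ≤ y 1) (hyM : y n ≤ M)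
    (hmono : Monotone (fun k => y (min (k+1) n)))
    (hj : ∀ i, eliasGammaLen (j i) ≤ 2 * L + 1)
    (hL : 1 ≤ L) :
    eliasGammaLen (D 1) +
      ∑ i ∈ Finset.Icc 2 n,
        (if 0 < D i then 1 + eliasGammaLen (D i)
         else if D (i - 1) ≠ 0 then 1 + eliasGammaLen (j i)
         else 0) ≤ 6 * M * L := by
  classical
  -- telescoping
  have htel : y 1 + ∑ i ∈ Finset.Icc 2 n, D i = y n := by
    have h := telescope_nat (fun k => y (min (k+1) n)) hmono (n-1)
    rw [show min (0+1) n = 1 by omega, show min (n-1+1) n = n by omega] at h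
    have hre : ∑ i ∈ Finset.Icc 2 n, D i
        = ∑ k ∈ Finset.range (n-1), (y (min (k+1+1) n) - y (min (k+1) n)) := by
      rw [← Finset.Ico_add_one_right_eq_Icc, Finset.sum_Ico_eq_sum_range,
        show n+1-2 = n-1 by omega]
      apply Finset.sum_congr rfl
      intro k hk
      rw [Finset.mem_range] at hk
      rw [hD (2+k) (by rw [Finset.mem_Icc]; omega),
        show min (k+1+1) n = 2+k by omega, show min (k+1) n = 2+k-1 by omega]
    rw [hre]
    exact h
  set S := ∑ i ∈ Finset.Icc 2 n, D i with hS
  set U := (Finset.Icc 2 n).filter (fun i => 0 < D i) with hU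
  set V := (Finset.Icc 2 n).filter (fun i => D i = 0 ∧ D (i-1) ≠ 0) with hV
  have hVcard : V.card ≤ S + 1 := by
    have hinj : Set.InjOn (· - 1) V := by
      intro a ha b hb h
      simp only [hV, Finset.coe_filter, Set.mem_setOf_eq, Finset.mem_Icc] at ha hb
      have h' : a - 1 = b - 1 := h
      omega
    have himg : V.image (· - 1) ⊆ insert 1 U := by
      intro a ha
      simp only [Finset.mem_image, hV, Finset.mem_filter, Finset.mem_Icc] at ha
      obtain ⟨i, ⟨⟨hi2, hin⟩, h0, hne⟩, rfl⟩ := ha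
      rcases eq_or_lt_of_le hi2 with h | h
      · simp [← h]
      · apply Finset.mem_insert_of_mem
        rw [hU, Finset.mem_filter, Finset.mem_Icc]
        exact ⟨⟨by omega, by omega⟩, Nat.pos_of_ne_zero hne⟩
    have hUS : U.card ≤ S := by
      rw [hS]
      calc U.card = ∑ _i ∈ U, 1 := by simp
        _ ≤ ∑ i ∈ U, D i := Finset.sum_le_sum (fun i hi => by
            rw [hU, Finset.mem_filter] at hi; omega)
        _ ≤ ∑ i ∈ Finset.Icc 2 n, D i :=
            Finset.sum_le_sum_of_subset (Finset.filter_subset _ _)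
    calc V.card = (V.image (· - 1)).card := (Finset.card_image_of_injOn hinj).symm
      _ ≤ (insert 1 U).card := Finset.card_le_card himg
      _ ≤ U.card + 1 := Finset.card_insert_le _ _
      _ ≤ S + 1 := by omega
  -- termwise bound
  have key : ∀ i ∈ Finset.Icc 2 n,
      (if 0 < D i then 1 + eliasGammaLen (D i)
       else if D (i - 1) ≠ 0 then 1 + eliasGammaLen (j i)
       else 0)
      ≤ (2 * D i : ℝ) + (if D i = 0 ∧ D (i-1) ≠ 0 then 2*L + 2 else 0) := by
    intro i _
    by_cases h1 : 0 < D i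
    · rw [if_pos h1, if_neg (by omega : ¬ (D i = 0 ∧ D (i-1) ≠ 0))]
      have h2 := eliasGammaLen_le_linear h1
      linarith
    · rw [if_neg h1]
      by_cases h2 : D (i-1) ≠ 0
      · rw [if_pos h2, if_pos ⟨by omega, h2⟩]
        have h3 : (0:ℝ) ≤ 2 * (D i : ℝ) := by positivity
        linarith [hj i]
      · rw [if_neg h2, if_neg (by tauto)]
        positivity
  have hsum :
      ∑ i ∈ Finset.Icc 2 n,
        (if 0 < D i then 1 + eliasGammaLen (D i)
         else if D (i - 1) ≠ 0 then 1 + eliasGammaLen (j i)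
         else 0)
      ≤ 2 * (S:ℝ) + (V.card : ℝ) * (2*L + 2) := by
    calc _ ≤ ∑ i ∈ Finset.Icc 2 n,
          ((2 * D i : ℝ) + (if D i = 0 ∧ D (i-1) ≠ 0 then 2*L + 2 else 0)) :=
        Finset.sum_le_sum key
      _ = 2 * (S:ℝ) + (V.card : ℝ) * (2*L + 2) := by
          rw [Finset.sum_add_distrib]
          congr 1
          · rw [hS]; push_cast; rw [Finset.mul_sum]
          · rw [← Finset.sum_filter, ← hV, Finset.sum_const, nsmul_eq_mul]
  -- assemble
  rw [hD1]
  have h1 : eliasGammaLen (y 1) ≤ 2 * (y 1 : ℝ) - 1 := eliasGammaLen_le_linear hy1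
  have hyn : ((y n : ℕ) : ℝ) ≤ (M:ℝ) := by exact_mod_cast hyM
  have htelR : (y 1 : ℝ) + (S : ℝ) = (y n : ℝ) := by exact_mod_cast htel
  have hy1R : (1:ℝ) ≤ (y 1 : ℝ) := by exact_mod_cast hy1
  have hVR : (V.card : ℝ) ≤ (S:ℝ) + 1 := by exact_mod_cast hVcard
  have hSR : (0:ℝ) ≤ (S:ℝ) := by positivity
  have hVR0 : (0:ℝ) ≤ (V.card : ℝ) := by positivity
  have hMS : (S:ℝ) ≤ (M:ℝ) - 1 := by linarith
  have hL0 : (0:ℝ) ≤ 2*L+2 := by linarith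
  nlinarith [hsum, mul_le_mul_of_nonneg_right hVR hL0,
    mul_nonneg (sub_nonneg.2 hL) (by linarith : (0:ℝ) ≤ (M:ℝ) - 1 - S),
    mul_nonneg (sub_nonneg.2 hL) (by linarith : (0:ℝ) ≤ (M:ℝ)),
    mul_nonneg (sub_nonneg.2 hL) hSR]

/-! ### Unfolded versions of `drlLength` -/

def yFun (n : ℕ) (x : Fin n → ℕ) : ℕ → ℕ :=
  fun i => if h : i - 1 < n then x (Tuple.sort x ⟨i - 1, h⟩) else 0

def DFun (n : ℕ) (x : Fin n → ℕ) : ℕ → ℕ := fun i =>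
  if i = 0 then 0
  else if i = 1 then yFun n x 1
  else if i ≤ n then yFun n x i - yFun n x (i - 1)
  else 1

def jFun (n : ℕ) (x : Fin n → ℕ) : ℕ → ℕ := fun i =>
  ((Finset.range (n + 1)).filter fun k => ∀ l ≤ k, DFun n x (i + l) = 0).card

lemma drlLength_eq (n : ℕ) (x : Fin n → ℕ) :
    drlLength n x = eliasGammaLen (DFun n x 1) +
      ∑ i ∈ Finset.Icc 2 n,
        (if 0 < DFun n x i then 1 + eliasGammaLen (DFun n x i)
         else if DFun n x (i - 1) ≠ 0 then 1 + eliasGammaLen (jFun n x i)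
         else 0) := rfl

lemma drl_nonneg (n : ℕ) (x : Fin n → ℕ) : 0 ≤ drlLength n x := by
  rw [drlLength_eq]
  apply add_nonneg (eliasGammaLen_nonneg _)
  apply Finset.sum_nonneg
  intro i _
  split_ifs
  · linarith [eliasGammaLen_nonneg (DFun n x i)]
  · linarith [eliasGammaLen_nonneg (jFun n x i)]
  · exact le_refl 0

lemma hL_one (n : ℕ) (hn : 1 ≤ n) : (1:ℝ) ≤ Real.logb 2 ((n:ℝ)+1) := by
  have h2 : Real.logb 2 (2:ℝ) = 1 := Real.logb_self_eq_one (b := 2) (by norm_num)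
  rw [← h2]
  apply Real.logb_le_logb_of_le (by norm_num) (by norm_num)
  have : (1:ℝ) ≤ (n:ℝ) := by exact_mod_cast hn
  linarith

lemma drl_le (n : ℕ) (hn : 1 ≤ n) (x : Fin n → ℕ) (hx : ∀ i, 0 < x i) :
    drlLength n x ≤ 6 * ((Finset.univ.sup x : ℕ) : ℝ) * Real.logb 2 ((n:ℝ)+1) := by
  rw [drlLength_eq]
  apply drl_core n hn (yFun n x) (DFun n x) (jFun n x) (Finset.univ.sup x)
    (Real.logb 2 ((n:ℝ)+1))
  · simp [DFun]
  · intro i hi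
    rw [Finset.mem_Icc] at hi
    simp only [DFun]
    rw [if_neg (by omega), if_neg (by omega), if_pos hi.2]
  · simp only [yFun]
    rw [dif_pos (by omega : 1 - 1 < n)]
    exact hx _
  · simp only [yFun]
    rw [dif_pos (by omega : n - 1 < n)]
    exact Finset.le_sup (Finset.mem_univ _)
  · intro k l hkl
    simp only [yFun]
    have ha : min (k+1) n - 1 < n := by omega
    have hb : min (l+1) n - 1 < n := by omega
    rw [dif_pos ha, dif_pos hb]
    exact Tuple.monotone_sort x (by rw [Fin.mk_le_mk]; omega)
  · intro i
    have hcard : jFun n x i ≤ n + 1 := by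
      simpa [jFun] using (Finset.card_filter_le (Finset.range (n+1)) _).trans
        (le_of_eq (Finset.card_range (n+1)))
    have := eliasGammaLen_le_logb (m := jFun n x i) (N := n+1) hcard (by omega)
    convert this using 3
    push_cast; ring
  · exact hL_one n hn

lemma final_arith (c lam L E A B : ℝ) (hc : 1 < c) (hlam : 0 < lam) (hL1 : 1 ≤ L)
    (hlamE : lam * E ≤ A + B + 2*lam + 1) (hlogc : A ≤ c - 1) (hlogc0 : 0 ≤ A)
    (hlogn : B ≤ L * Real.log 2) (hlogn0 : 0 ≤ B) (hE0 : 0 ≤ E) :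
    6*L*E*lam ≤ 13*(2*lam+1)*c*L^2 := by
  have hlog2 : Real.log 2 ≤ 0.6931471808 := le_of_lt Real.log_two_lt_d9
  have hLL : L ≤ L^2 := by nlinarith
  have key1 : 6*L*E*lam ≤ 6*L*(A+B+2*lam+1) := by
    have h := mul_le_mul_of_nonneg_left hlamE (show (0:ℝ) ≤ 6*L by linarith)
    calc 6*L*E*lam = 6*L*(lam*E) := by ring
      _ ≤ 6*L*(A+B+2*lam+1) := h
  have s1 : L*A ≤ (c-1)*L^2 := by nlinarith
  have s2 : L*B ≤ 0.7*L^2 := by nlinarith [sq_nonneg L]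
  have s3 : L*lam ≤ lam*L^2 := by nlinarith
  have hc1 : (0:ℝ) ≤ 7*c - 4.2 := by linarith
  have hc2 : (0:ℝ) ≤ 26*c - 12 := by linarith
  nlinarith [key1, s1, s2, s3, hLL, mul_nonneg hc1 (sq_nonneg L),
    mul_nonneg (mul_nonneg hlam.le hc2) (sq_nonneg L)]

/-- If `X_1, …, X_n` are i.i.d. positive-integer valued random
variables with `P(X_1 > x) ≤ c·e^{-λx}` for every integer `x ≥ 0` (`c > 1`, `λ > 0`),
then the expected difference run-length codeword length satisfies
`E[L(W)] ≤ (13·(2λ+1)·c/λ)·(log₂(n + 1))²`. -/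
theorem drl_expected_length_exponential_tail
    {Ω : Type*} [MeasurableSpace Ω] (μ : Measure Ω) [IsProbabilityMeasure μ]
    (n : ℕ) (hn : 1 ≤ n) (c lam : ℝ) (hc : 1 < c) (hlam : 0 < lam)
    (X : Fin n → Ω → ℕ) (hmeas : ∀ i, Measurable (X i))
    (hindep : iIndepFun X μ)
    (hident : ∀ i, IdentDistrib (X i) (X ⟨0, hn⟩) μ μ)
    (hpos : ∀ i ω, 0 < X i ω)
    (htail : ∀ x : ℕ, (μ {ω | x < X ⟨0, hn⟩ ω}).toReal ≤ c * Real.exp (-lam * x)) :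
    ∫ ω, drlLength n (fun i => X i ω) ∂μ ≤
      13 * (2 * lam + 1) * c / lam * (Real.logb 2 (n + 1)) ^ 2 := by
  classical
  have hexp1 : Real.exp (-lam) < 1 := Real.exp_lt_one_iff.mpr (by linarith)
  have h1me : 0 < 1 - Real.exp (-lam) := by linarith
  set L := Real.logb 2 ((n:ℝ)+1) with hLdef
  have hL1 : 1 ≤ L := hL_one n hn
  set X0 : Ω → ℕ := X ⟨0, hn⟩ with hX0
  have hmeas0 : Measurable X0 := hmeas _
  set M : Ω → ℕ := fun ω => Finset.univ.sup (fun i => X i ω) with hMdef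
  have hMmeas : Measurable M := by
    have hvec : Measurable (fun ω => (fun i => X i ω : Fin n → ℕ)) :=
      measurable_pi_lambda _ hmeas
    exact (measurable_of_countable (fun v : Fin n → ℕ => Finset.univ.sup v)).comp hvec
  set t : ℕ := ⌈Real.log (c * n) / lam⌉₊ with htdef
  have hcpos : (0:ℝ) < c := by linarith
  have hnpos : (0:ℝ) < (n:ℝ) := by exact_mod_cast hn
  have h1n : (1:ℝ) ≤ (n:ℝ) := by exact_mod_cast hn
  have hcn : (1:ℝ) ≤ c * n := by nlinarith [mul_nonneg (sub_nonneg.2 hc.le) hnpos.le]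
  -- tail bound in ℝ≥0∞
  have htail' : ∀ k : ℕ, μ {ω | t + k < X0 ω}
      ≤ ENNReal.ofReal (c * Real.exp (-lam * ((t+k : ℕ) : ℝ))) := by
    intro k
    rw [← ENNReal.ofReal_toReal (measure_ne_top μ _)]
    exact ENNReal.ofReal_le_ofReal (htail (t+k))
  -- layer cake for X0 - t
  have hlayer : ∫⁻ ω, ((X0 ω - t : ℕ) : ℝ≥0∞) ∂μ = ∑' k : ℕ, μ {ω | t + k < X0 ω} := by
    have hpt : ∀ ω, ((X0 ω - t : ℕ) : ℝ≥0∞)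
        = ∑' k : ℕ, Set.indicator {ω' | t + k < X0 ω'} (fun _ => (1:ℝ≥0∞)) ω := by
      intro ω
      rw [tsum_eq_sum (s := Finset.range (X0 ω - t))
        (fun k hk => Set.indicator_of_notMem
          (by rw [Finset.mem_range] at hk; simp only [Set.mem_setOf_eq]; omega) _)]
      rw [Finset.sum_congr rfl (fun k hk => Set.indicator_of_mem
        (by rw [Finset.mem_range] at hk; simp only [Set.mem_setOf_eq]; omega) _)]
      simp
    have hsetm : ∀ k : ℕ, MeasurableSet {ω' | t + k < X0 ω'} := fun k =>
      hmeas0 (MeasurableSet.of_discrete (s := {m : ℕ | t + k < m}))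
    simp_rw [hpt]
    rw [lintegral_tsum (fun k => (measurable_const.indicator (hsetm k)).aemeasurable)]
    refine tsum_congr (fun k => ?_)
    rw [lintegral_indicator_const (hsetm k), one_mul]
  -- geometric bound
  have hgeo : ∑' k : ℕ, ENNReal.ofReal (c * Real.exp (-lam * ((t+k:ℕ):ℝ)))
      = ENNReal.ofReal (c * Real.exp (-lam * t) / (1 - Real.exp (-lam))) := by
    have hterm : ∀ k : ℕ, c * Real.exp (-lam * ((t+k:ℕ):ℝ))
        = (c * Real.exp (-lam * t)) * Real.exp (-lam) ^ k := by
      intro k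
      rw [← Real.exp_nat_mul]
      push_cast
      rw [mul_assoc, ← Real.exp_add]
      ring_nf
    simp_rw [hterm]
    have hs : Summable (fun k : ℕ => (c * Real.exp (-lam * t)) * Real.exp (-lam) ^ k) :=
      (summable_geometric_of_lt_one (Real.exp_pos _).le hexp1).mul_left _
    rw [← ENNReal.ofReal_tsum_of_nonneg (fun k => by positivity) hs,
      tsum_mul_left, tsum_geometric_of_lt_one (Real.exp_pos _).le hexp1,
      div_eq_mul_inv]
  have hX0int : ∫⁻ ω, ((X0 ω - t : ℕ) : ℝ≥0∞) ∂μ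
      ≤ ENNReal.ofReal (c * Real.exp (-lam * t) / (1 - Real.exp (-lam))) := by
    rw [hlayer, ← hgeo]
    exact ENNReal.tsum_le_tsum htail'
  -- same bound for each Xi by identical distribution
  have hXi : ∀ i : Fin n, ∫⁻ ω, ((X i ω - t : ℕ) : ℝ≥0∞) ∂μ
      = ∫⁻ ω, ((X0 ω - t : ℕ) : ℝ≥0∞) ∂μ := by
    intro i
    exact ((hident i).comp (measurable_of_countable
      (fun m : ℕ => ((m - t : ℕ) : ℝ≥0∞)))).lintegral_eq
  -- bound on lintegral of M
  have hEineq : (n:ℝ) * (c * Real.exp (-lam * t) / (1 - Real.exp (-lam)))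
      ≤ 1 / (1 - Real.exp (-lam)) := by
    have ht1 : Real.log (c * n) / lam ≤ (t:ℝ) := Nat.le_ceil _
    have hexp2 : Real.exp (-lam * t) ≤ (c * n)⁻¹ := by
      have h := Real.exp_le_exp.mpr (show -lam * t ≤ -(Real.log (c * n)) by
        have := mul_le_mul_of_nonneg_left ht1 hlam.le
        rw [mul_div_cancel₀ _ (ne_of_gt hlam)] at this
        linarith)
      rwa [Real.exp_neg, Real.exp_log (by linarith)] at h
    have hmul : (n:ℝ) * (c * Real.exp (-lam * t)) ≤ 1 := by
      calc (n:ℝ) * (c * Real.exp (-lam * t)) ≤ (n:ℝ) * (c * (c*n)⁻¹) := by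
            apply mul_le_mul_of_nonneg_left _ hnpos.le
            exact mul_le_mul_of_nonneg_left hexp2 hcpos.le
        _ = 1 := by field_simp
    calc (n:ℝ) * (c * Real.exp (-lam * t) / (1 - Real.exp (-lam)))
        = ((n:ℝ) * (c * Real.exp (-lam * t))) / (1 - Real.exp (-lam)) := by ring
      _ ≤ 1 / (1 - Real.exp (-lam)) := (div_le_div_iff_of_pos_right h1me).mpr hmul
  have hMptwise : ∀ ω, ((M ω : ℕ) : ℝ≥0∞)
      ≤ ((t : ℕ) : ℝ≥0∞) + ∑ i : Fin n, ((X i ω - t : ℕ) : ℝ≥0∞) := by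
    intro ω
    have hnat : M ω ≤ t + ∑ i : Fin n, (X i ω - t) := by
      apply Finset.sup_le
      intro i _
      have h1 : X i ω - t ≤ ∑ i' : Fin n, (X i' ω - t) :=
        Finset.single_le_sum (f := fun i' => X i' ω - t)
          (fun _ _ => Nat.zero_le _) (Finset.mem_univ i)
      omega
    calc ((M ω : ℕ) : ℝ≥0∞) ≤ ((t + ∑ i : Fin n, (X i ω - t) : ℕ) : ℝ≥0∞) := by
          exact_mod_cast hnat
      _ = ((t : ℕ) : ℝ≥0∞) + ∑ i : Fin n, ((X i ω - t : ℕ) : ℝ≥0∞) := by push_cast; rfl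
  have hMlin : ∫⁻ ω, ((M ω : ℕ) : ℝ≥0∞) ∂μ
      ≤ ENNReal.ofReal ((t:ℝ) + 1 / (1 - Real.exp (-lam))) := by
    have hmeasXi : ∀ i : Fin n, Measurable (fun ω => ((X i ω - t : ℕ) : ℝ≥0∞)) :=
      fun i => (measurable_of_countable (fun m : ℕ => ((m - t : ℕ) : ℝ≥0∞))).comp (hmeas i)
    calc ∫⁻ ω, ((M ω : ℕ) : ℝ≥0∞) ∂μ
        ≤ ∫⁻ ω, (((t : ℕ) : ℝ≥0∞) + ∑ i : Fin n, ((X i ω - t : ℕ) : ℝ≥0∞)) ∂μ :=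
          lintegral_mono hMptwise
      _ = ((t : ℕ) : ℝ≥0∞) + ∑ i : Fin n, ∫⁻ ω, ((X i ω - t : ℕ) : ℝ≥0∞) ∂μ := by
          rw [lintegral_add_left measurable_const,
            lintegral_finset_sum _ (fun i _ => hmeasXi i), lintegral_const,
            measure_univ, mul_one]
      _ = ((t : ℕ) : ℝ≥0∞) + (n : ℝ≥0∞) * ∫⁻ ω, ((X0 ω - t : ℕ) : ℝ≥0∞) ∂μ := by
          rw [Finset.sum_congr rfl (fun i _ => hXi i), Finset.sum_const,
            Finset.card_univ, Fintype.card_fin, nsmul_eq_mul]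
      _ ≤ ((t : ℕ) : ℝ≥0∞)
          + (n : ℝ≥0∞) * ENNReal.ofReal (c * Real.exp (-lam * t) / (1 - Real.exp (-lam))) := by
          gcongr
      _ ≤ ENNReal.ofReal ((t:ℝ) + 1 / (1 - Real.exp (-lam))) := by
          rw [← ENNReal.ofReal_natCast t, ← ENNReal.ofReal_natCast n,
            ← ENNReal.ofReal_mul (Nat.cast_nonneg n),
            ← ENNReal.ofReal_add (Nat.cast_nonneg t) (by positivity)]
          exact ENNReal.ofReal_le_ofReal (by linarith [hEineq])
  -- from lintegral to Bochner integral
  have hbound_nonneg : (0:ℝ) ≤ (t:ℝ) + 1 / (1 - Real.exp (-lam)) := by positivity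
  have hMrealmeas : Measurable (fun ω => ((M ω : ℕ) : ℝ)) :=
    (measurable_of_countable (fun m : ℕ => (m : ℝ))).comp hMmeas
  have hMint : Integrable (fun ω => ((M ω : ℕ) : ℝ)) μ := by
    refine ⟨hMrealmeas.aestronglyMeasurable, ?_⟩
    rw [hasFiniteIntegral_iff_ofReal (ae_of_all μ fun ω => Nat.cast_nonneg _)]
    have : ∀ ω, ENNReal.ofReal ((M ω : ℕ) : ℝ) = ((M ω : ℕ) : ℝ≥0∞) := fun ω =>
      ENNReal.ofReal_natCast _
    simp_rw [this]
    exact lt_of_le_of_lt hMlin ENNReal.ofReal_lt_top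
  have hEreal : ∫ ω, ((M ω : ℕ) : ℝ) ∂μ ≤ (t:ℝ) + 1 / (1 - Real.exp (-lam)) := by
    rw [integral_eq_lintegral_of_nonneg_ae (ae_of_all μ fun ω => Nat.cast_nonneg _)
      hMrealmeas.aestronglyMeasurable]
    have : ∀ ω, ENNReal.ofReal ((M ω : ℕ) : ℝ) = ((M ω : ℕ) : ℝ≥0∞) := fun ω =>
      ENNReal.ofReal_natCast _
    simp_rw [this]
    exact ENNReal.toReal_le_of_le_ofReal hbound_nonneg hMlin
  -- pointwise deterministic bound and conclusion
  have hptA : ∀ ω, drlLength n (fun i => X i ω) ≤ 6 * L * ((M ω : ℕ) : ℝ) := by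
    intro ω
    have := drl_le n hn (fun i => X i ω) (fun i => hpos i ω)
    calc drlLength n (fun i => X i ω) ≤ 6 * ((M ω : ℕ) : ℝ) * L := this
      _ = 6 * L * ((M ω : ℕ) : ℝ) := by ring
  have hstep : ∫ ω, drlLength n (fun i => X i ω) ∂μ ≤ 6 * L * ∫ ω, ((M ω : ℕ) : ℝ) ∂μ := by
    have h := integral_mono_of_nonneg
      (ae_of_all μ fun ω => drl_nonneg n (fun i => X i ω))
      (hMint.const_mul (6 * L)) (ae_of_all μ hptA)
    rwa [integral_const_mul] at h
  -- final arithmetic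
  have hEM0 : (0:ℝ) ≤ ∫ ω, ((M ω : ℕ) : ℝ) ∂μ :=
    integral_nonneg (fun ω => Nat.cast_nonneg _)
  refine hstep.trans ?_
  set E := ∫ ω, ((M ω : ℕ) : ℝ) ∂μ with hEdef
  -- bound (t : ℝ)
  have hlogcn : 0 ≤ Real.log (c * n) := Real.log_nonneg hcn
  have ht2 : (t:ℝ) ≤ Real.log (c * n) / lam + 1 :=
    le_of_lt (Nat.ceil_lt_add_one (by positivity))
  have hsplit : Real.log (c * n) = Real.log c + Real.log n :=
    Real.log_mul (ne_of_gt hcpos) (ne_of_gt hnpos)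
  have hlogc : Real.log c ≤ c - 1 := by
    have := Real.add_one_le_exp (Real.log c)
    rw [Real.exp_log hcpos] at this
    linarith
  have hlogc0 : 0 ≤ Real.log c := Real.log_nonneg hc.le
  have hlogn : Real.log n ≤ L * Real.log 2 := by
    have h1 : Real.log (n:ℝ) ≤ Real.log ((n:ℝ)+1) := Real.log_le_log hnpos (by linarith)
    have h2 : L * Real.log 2 = Real.log ((n:ℝ)+1) := by
      rw [hLdef, Real.logb, div_mul_cancel₀ _ (ne_of_gt (Real.log_pos (by norm_num)))]
    linarith
  have hlogn0 : 0 ≤ Real.log (n:ℝ) := Real.log_nonneg (by exact_mod_cast hn)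
  have hlog2 : Real.log 2 ≤ 0.6931471808 := le_of_lt Real.log_two_lt_d9
  have hlog2pos : 0 < Real.log 2 := Real.log_pos (by norm_num)
  have hinv : 1 / (1 - Real.exp (-lam)) ≤ (lam + 1) / lam := by
    have he : Real.exp (-lam) ≤ 1 / (lam + 1) := by
      rw [Real.exp_neg, one_div]
      exact inv_anti₀ (by linarith) (by linarith [Real.add_one_le_exp lam])
    have h2 : lam / (lam + 1) ≤ 1 - Real.exp (-lam) := by
      have h3 : lam / (lam + 1) = 1 - 1 / (lam + 1) := by field_simp; ring
      linarith
    calc 1 / (1 - Real.exp (-lam)) ≤ 1 / (lam / (lam + 1)) :=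
        one_div_le_one_div_of_le (div_pos hlam (by linarith)) h2
      _ = (lam + 1) / lam := one_div_div _ _
  -- assemble: E ≤ log c / lam + log n / lam + 1 + (lam+1)/lam
  have hE : E ≤ (Real.log c + Real.log n) / lam + 1 + (lam + 1) / lam := by
    calc E ≤ (t:ℝ) + 1 / (1 - Real.exp (-lam)) := hEreal
      _ ≤ (Real.log (c*n) / lam + 1) + (lam + 1) / lam := by linarith
      _ = (Real.log c + Real.log n) / lam + 1 + (lam + 1) / lam := by rw [hsplit]
  have hlamE : lam * E ≤ Real.log c + Real.log n + 2 * lam + 1 := by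
    have h := mul_le_mul_of_nonneg_left hE hlam.le
    have heq : lam * ((Real.log c + Real.log n) / lam + 1 + (lam + 1) / lam)
        = Real.log c + Real.log n + 2 * lam + 1 := by
      field_simp
      ring
    linarith [heq ▸ h]
  -- final polynomial inequality
  rw [show (13:ℝ) * (2 * lam + 1) * c / lam * (Real.logb 2 ((n:ℝ) + 1)) ^ 2
      = (13 * (2 * lam + 1) * c * L ^ 2) / lam by rw [← hLdef]; ring,
    le_div_iff₀ hlam]
  have hcL : (1:ℝ) ≤ c := hc.le
  have hL0 : (0:ℝ) ≤ L := by linarith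
  set A := Real.log c
  set B := Real.log (n:ℝ)
  exact final_arith c lam L E A B hc hlam hL1 hlamE hlogc hlogc0 hlogn hlogn0 hEM0
end

section
/- Let n ≥ 1 be an integer and let f : [0,1] → [0,∞) be a non-increasing probability density function (∫₀¹ f(t) dt = 1). Define rectangle areas A(0,0) = f(1) and, for integers k ≥ 1 and a ∈ {0, 1, …, 2^(k−1) − 1}, A(k,a) = 2^(−k)·( f(2^(−k)(2a+1)) − f(2^(−k+1)(a+1)) ). For each such pair (k,a) let N_{k,a} be a Binomial(n, A(k,a)) random variable. Then Σ over all pairs (k,a) (including (0,0)) of [ (L_s(k) + L_s(a)) · P(N_{k,a} ≥ 1) + E[ (⌊2·log₂ N_{k,a} + 1⌋) · 1{N_{k,a} ≥ 1} ] ] ≤ 92·√(n·f(0))·log₂(√(n·f(0)) + 1). -/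
open MeasureTheory

/-- The shifted Elias gamma codeword length of a nonnegative integer `m`:
`L_s(m) = L_γ(m+1) = ⌊2·log₂(m+1) + 1⌋`. -/
noncomputable def shiftedEliasGammaLen (m : ℕ) : ℝ := eliasGammaLen (m + 1)

/-- The contribution of one dyadic rectangle with area (probability) `p` to the
expected codeword length, where `Lk` and `La` are the lengths of the shifted
Elias gamma codes of its indices `k` and `a`, and `N ~ Binomial(n, p)`:
`(Lk + La)·P(N ≥ 1) + E[⌊2·log₂ N + 1⌋·1{N ≥ 1}]`. -/
noncomputable def rectCost (n : ℕ) (Lk La p : ℝ) : ℝ :=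
  (Lk + La) * (1 - (1 - p) ^ n) +
    ∑ m ∈ Finset.Icc 1 n, (n.choose m : ℝ) * p ^ m * (1 - p) ^ (n - m) * eliasGammaLen m

set_option linter.unusedSectionVars false

lemma elias_nonneg {m : ℕ} (hm : 1 ≤ m) : 0 ≤ eliasGammaLen m := by
  unfold eliasGammaLen
  have h : (0:ℝ) ≤ Real.logb 2 (m:ℝ) :=
    Real.logb_nonneg one_lt_two (by exact_mod_cast hm)
  have : (0:ℤ) ≤ ⌊2 * Real.logb 2 (m : ℝ) + 1⌋ := by
    apply Int.le_floor.2; push_cast; linarith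
  exact_mod_cast this

lemma elias_le {m M : ℕ} (hm : 1 ≤ m) (hM : m ≤ M) :
    eliasGammaLen m ≤ 2 * Real.logb 2 (M : ℝ) + 1 := by
  unfold eliasGammaLen
  have h1 : Real.logb 2 (m:ℝ) ≤ Real.logb 2 (M:ℝ) := by
    have hm' : (0:ℝ) < m := by exact_mod_cast hm
    have hM' : (0:ℝ) < M := by have : (1:ℕ) ≤ M := le_trans hm hM; exact_mod_cast Nat.lt_of_lt_of_le Nat.zero_lt_one this
    exact (Real.logb_le_logb one_lt_two hm' (by linarith)).2 (by exact_mod_cast hM)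
  calc ((⌊2 * Real.logb 2 (m : ℝ) + 1⌋ : ℤ) : ℝ) ≤ 2 * Real.logb 2 (m : ℝ) + 1 :=
        Int.floor_le _
    _ ≤ 2 * Real.logb 2 (M : ℝ) + 1 := by linarith

lemma shifted_nonneg (m : ℕ) : 0 ≤ shiftedEliasGammaLen m := elias_nonneg (by omega)

lemma shifted_le {m M : ℕ} (hM : m + 1 ≤ 2 ^ M) :
    shiftedEliasGammaLen m ≤ 2 * (M:ℝ) + 1 := by
  have := elias_le (m := m + 1) (M := 2 ^ M) (by omega) hM
  unfold shiftedEliasGammaLen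
  calc eliasGammaLen (m+1) ≤ 2 * Real.logb 2 ((2:ℝ)^M) + 1 := by push_cast at this ⊢; exact this
    _ = 2 * (M:ℝ) + 1 := by
        rw [Real.logb_pow, Real.logb_self_eq_one one_lt_two, mul_one]

lemma shifted_zero : shiftedEliasGammaLen 0 = 1 := by
  unfold shiftedEliasGammaLen eliasGammaLen
  norm_num

lemma rectCost_nonneg (n : ℕ) {Lk La p : ℝ} (hLk : 0 ≤ Lk) (hLa : 0 ≤ La)
    (hp0 : 0 ≤ p) (hp1 : p ≤ 1) : 0 ≤ rectCost n Lk La p := by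
  unfold rectCost
  have h1 : (1 - p) ^ n ≤ 1 := pow_le_one₀ (by linarith) (by linarith)
  apply add_nonneg
  · apply mul_nonneg (by linarith) (by linarith)
  · apply Finset.sum_nonneg
    intro m hm
    simp only [Finset.mem_Icc] at hm
    have h1 := elias_nonneg hm.1
    have h2 : (0:ℝ) ≤ (n.choose m : ℝ) * p ^ m * (1 - p) ^ (n - m) := by
      apply mul_nonneg (mul_nonneg (by positivity) (by positivity))
      exact pow_nonneg (by linarith) _
    exact mul_nonneg h2 h1

lemma binom_sum (n : ℕ) {p : ℝ} :
    (1 - p) ^ n + ∑ m ∈ Finset.Icc 1 n, (n.choose m : ℝ) * p ^ m * (1 - p) ^ (n - m) = 1 := by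
  have h := add_pow p (1 - p) n
  have hr : Finset.range (n+1) = insert 0 (Finset.Icc 1 n) := by
    ext x; simp [Finset.mem_range, Finset.mem_Icc]; omega
  rw [hr, Finset.sum_insert (by simp)] at h
  simp only [pow_zero, one_mul, Nat.sub_zero, Nat.choose_zero_right, Nat.cast_one, mul_one] at h
  have : p + (1 - p) = 1 := by ring
  rw [this, one_pow] at h
  have e2 : ∑ m ∈ Finset.Icc 1 n, (n.choose m : ℝ) * p ^ m * (1 - p) ^ (n - m)
      = ∑ m ∈ Finset.Icc 1 n, p ^ m * (1 - p) ^ (n - m) * (n.choose m : ℝ) :=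
    Finset.sum_congr rfl (fun m _ => by ring)
  rw [e2]; linarith

lemma rectCost_le (n : ℕ) (hn : 1 ≤ n) {Lk La p : ℝ} (hLk : 0 ≤ Lk) (hLa : 0 ≤ La)
    (hp0 : 0 ≤ p) (hp1 : p ≤ 1) :
    rectCost n Lk La p ≤ (Lk + La + 2 * Real.logb 2 (n:ℝ) + 1) * min 1 ((n:ℝ) * p) := by
  have hq0 : (0:ℝ) ≤ 1 - p := by linarith
  have hqn0 : (0:ℝ) ≤ (1-p)^n := by positivity
  have hqn1 : (1 - p) ^ n ≤ 1 := pow_le_one₀ hq0 (by linarith)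
  have hmin : 1 - (1-p)^n ≤ min 1 ((n:ℝ)*p) := by
    apply le_min (by linarith)
    have := one_add_mul_le_pow (a := -p) (by linarith) n
    have e3 : (1 + -p)^n = (1-p)^n := by ring_nf
    rw [e3] at this
    nlinarith
  have hmin0 : 0 ≤ min 1 ((n:ℝ)*p) := le_min (by norm_num) (by positivity)
  have hD : (0:ℝ) ≤ 2 * Real.logb 2 (n:ℝ) + 1 := by
    have : (0:ℝ) ≤ Real.logb 2 (n:ℝ) := Real.logb_nonneg one_lt_two (by exact_mod_cast hn)
    linarith
  unfold rectCost
  have hsum : ∑ m ∈ Finset.Icc 1 n, (n.choose m : ℝ) * p ^ m * (1 - p) ^ (n - m) * eliasGammaLen m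
      ≤ (2 * Real.logb 2 (n:ℝ) + 1) * (1 - (1-p)^n) := by
    have e := binom_sum n (p := p)
    calc ∑ m ∈ Finset.Icc 1 n, (n.choose m : ℝ) * p ^ m * (1 - p) ^ (n - m) * eliasGammaLen m
        ≤ ∑ m ∈ Finset.Icc 1 n, (n.choose m : ℝ) * p ^ m * (1 - p) ^ (n - m) *
            (2 * Real.logb 2 (n:ℝ) + 1) := by
          apply Finset.sum_le_sum
          intro m hm
          simp only [Finset.mem_Icc] at hm
          have hb : (0:ℝ) ≤ (n.choose m : ℝ) * p ^ m * (1 - p) ^ (n - m) := by positivity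
          exact mul_le_mul_of_nonneg_left (elias_le hm.1 hm.2) hb
      _ = (2 * Real.logb 2 (n:ℝ) + 1) * (1 - (1-p)^n) := by
          rw [← Finset.sum_mul]
          have : ∑ m ∈ Finset.Icc 1 n, (n.choose m : ℝ) * p ^ m * (1 - p) ^ (n - m) = 1 - (1-p)^n := by
            linarith
          rw [this]; ring
  calc (Lk + La) * (1 - (1 - p) ^ n) +
      ∑ m ∈ Finset.Icc 1 n, (n.choose m : ℝ) * p ^ m * (1 - p) ^ (n - m) * eliasGammaLen m
      ≤ (Lk + La) * min 1 ((n:ℝ)*p) + (2 * Real.logb 2 (n:ℝ) + 1) * (1 - (1-p)^n) := by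
        have := mul_le_mul_of_nonneg_left hmin (add_nonneg hLk hLa)
        linarith
    _ ≤ (Lk + La) * min 1 ((n:ℝ)*p) + (2 * Real.logb 2 (n:ℝ) + 1) * min 1 ((n:ℝ)*p) := by
        have := mul_le_mul_of_nonneg_left hmin hD
        linarith
    _ = (Lk + La + 2 * Real.logb 2 (n:ℝ) + 1) * min 1 ((n:ℝ) * p) := by ring


section
variable (f : ℝ → ℝ)
    (hf_nonneg : ∀ x ∈ Set.Icc (0 : ℝ) 1, 0 ≤ f x)
    (hf_anti : AntitoneOn f (Set.Icc (0 : ℝ) 1))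
    (hf_pdf : ∫ t in (0 : ℝ)..1, f t = 1)

include hf_nonneg hf_anti hf_pdf in
lemma xfx_le_one {x : ℝ} (hx0 : 0 < x) (hx1 : x ≤ 1) : x * f x ≤ 1 := by
  have huIcc : Set.uIcc (0:ℝ) 1 = Set.Icc 0 1 := Set.uIcc_of_le (by norm_num)
  have hInt : IntervalIntegrable f volume 0 1 := by
    apply AntitoneOn.intervalIntegrable; rwa [huIcc]
  have hsub : Set.uIcc (0:ℝ) x ⊆ Set.uIcc (0:ℝ) 1 := by
    rw [huIcc, Set.uIcc_of_le hx0.le]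
    exact Set.Icc_subset_Icc le_rfl hx1
  have hsub2 : Set.uIcc x 1 ⊆ Set.uIcc (0:ℝ) 1 := by
    rw [huIcc, Set.uIcc_of_le hx1]
    exact Set.Icc_subset_Icc hx0.le le_rfl
  have hIntx : IntervalIntegrable f volume 0 x := hInt.mono_set hsub
  have hIntx1 : IntervalIntegrable f volume x 1 := hInt.mono_set hsub2
  have h1 : x * f x ≤ ∫ t in (0:ℝ)..x, f t := by
    have := intervalIntegral.integral_mono_on (f := fun _ => f x) (g := f) hx0.le
      (intervalIntegrable_const) hIntx (fun t ht => hf_anti ⟨ht.1, le_trans ht.2 hx1⟩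
        ⟨hx0.le, hx1⟩ ht.2)
    simpa using this
  have h2 : (0:ℝ) ≤ ∫ t in x..(1:ℝ), f t :=
    intervalIntegral.integral_nonneg hx1 (fun t ht => hf_nonneg t ⟨le_trans hx0.le ht.1, ht.2⟩)
  have h3 : (∫ t in (0:ℝ)..x, f t) + ∫ t in x..(1:ℝ), f t = 1 := by
    rw [intervalIntegral.integral_add_adjacent_intervals hIntx hIntx1, hf_pdf]
  linarith

include hf_nonneg hf_anti hf_pdf in
lemma one_le_f_zero : 1 ≤ f 0 := by
  have huIcc : Set.uIcc (0:ℝ) 1 = Set.Icc 0 1 := Set.uIcc_of_le (by norm_num)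
  have hInt : IntervalIntegrable f volume 0 1 := by
    apply AntitoneOn.intervalIntegrable; rwa [huIcc]
  have h1 : (∫ t in (0:ℝ)..1, f t) ≤ ∫ _t in (0:ℝ)..1, f 0 := by
    apply intervalIntegral.integral_mono_on (by norm_num) hInt intervalIntegrable_const
    intro t ht
    exact hf_anti ⟨le_rfl, by norm_num⟩ ht ht.1
  rw [hf_pdf] at h1
  simpa using h1

end

set_option maxHeartbeats 2000000 in
/-- For a non-increasing pdf `f` on `[0,1]`, the expected
codeword length of the dyadic decomposition scheme, i.e., the sum over all
rectangles `(k,a)` (with areas `A(0,0) = f(1)` and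
`A(k,a) = 2^{-k}(f(2^{-k}(2a+1)) - f(2^{-k+1}(a+1)))` for `k ≥ 1`,
`0 ≤ a < 2^{k-1}`) of
`(L_s(k)+L_s(a))·P(N_{k,a} ≥ 1) + E[⌊2log₂ N_{k,a}+1⌋·1{N_{k,a} ≥ 1}]`,
is at most `92·√(n·f(0))·log₂(√(n·f(0)) + 1)`. -/
theorem dyadic_expected_length_bound
    (n : ℕ) (hn : 1 ≤ n) (f : ℝ → ℝ)
    (hf_nonneg : ∀ x ∈ Set.Icc (0 : ℝ) 1, 0 ≤ f x)
    (hf_anti : AntitoneOn f (Set.Icc (0 : ℝ) 1))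
    (hf_pdf : ∫ t in (0 : ℝ)..1, f t = 1) :
    rectCost n (shiftedEliasGammaLen 0) (shiftedEliasGammaLen 0) (f 1)
      + ∑' k : ℕ, ∑ a ∈ Finset.range (2 ^ k),
          rectCost n (shiftedEliasGammaLen (k + 1)) (shiftedEliasGammaLen a)
            ((f ((2 * (a : ℝ) + 1) / 2 ^ (k + 1)) - f (((a : ℝ) + 1) / 2 ^ k)) / 2 ^ (k + 1))
      ≤ 92 * Real.sqrt (n * f 0) * Real.logb 2 (Real.sqrt (n * f 0) + 1) := by
  have hf0 : 1 ≤ f 0 := one_le_f_zero f hf_nonneg hf_anti hf_pdf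
  have hf1_le : f 1 ≤ 1 := by
    have := xfx_le_one f hf_nonneg hf_anti hf_pdf (x := 1) one_pos le_rfl
    linarith
  have hf1_ge : 0 ≤ f 1 := hf_nonneg 1 ⟨by norm_num, le_rfl⟩
  set T : ℝ := (n:ℝ) * f 0 with hTdef
  have hn1 : (1:ℝ) ≤ (n:ℝ) := by exact_mod_cast hn
  have hT1 : 1 ≤ T := by nlinarith
  set S : ℝ := Real.sqrt T with hSdef
  have hS0 : 0 ≤ S := Real.sqrt_nonneg _
  have hSS : S * S = T := Real.mul_self_sqrt (by linarith)
  have hS1 : 1 ≤ S := by nlinarith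
  set μ : ℝ := Real.logb 2 (S + 1) with hμdef
  have hμ1 : 1 ≤ μ := by
    rw [hμdef]
    calc (1:ℝ) = Real.logb 2 2 := (Real.logb_self_eq_one one_lt_two).symm
      _ ≤ Real.logb 2 (S+1) := (Real.logb_le_logb one_lt_two two_pos (by linarith)).2 (by linarith)
  have hlogS : Real.logb 2 S ≤ μ := by
    rw [hμdef]
    exact (Real.logb_le_logb one_lt_two (by linarith) (by linarith)).2 (by linarith)
  have hlogS0 : 0 ≤ Real.logb 2 S := Real.logb_nonneg one_lt_two hS1
  have hlogn : Real.logb 2 (n:ℝ) ≤ 2 * μ := by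
    have hnT : (n:ℝ) ≤ T := by nlinarith
    calc Real.logb 2 (n:ℝ) ≤ Real.logb 2 T :=
          (Real.logb_le_logb one_lt_two (by linarith) (by linarith)).2 hnT
      _ = Real.logb 2 (S * S) := by rw [hSS]
      _ = Real.logb 2 S + Real.logb 2 S := Real.logb_mul (by linarith) (by linarith)
      _ ≤ 2 * μ := by linarith
  set D : ℝ := 2 * Real.logb 2 (n:ℝ) + 1 with hDdef
  have hD0 : 0 ≤ D := by
    have : (0:ℝ) ≤ Real.logb 2 (n:ℝ) := Real.logb_nonneg one_lt_two hn1
    rw [hDdef]; linarith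
  set c : ℝ := D + 4 with hcdef
  have hc0 : 0 ≤ c := by linarith
  -- the level sums
  set g : ℕ → ℝ := fun k => ∑ a ∈ Finset.range (2 ^ k),
      rectCost n (shiftedEliasGammaLen (k + 1)) (shiftedEliasGammaLen a)
        ((f ((2 * (a : ℝ) + 1) / 2 ^ (k + 1)) - f (((a : ℝ) + 1) / 2 ^ k)) / 2 ^ (k + 1))
    with hgdef
  set B : ℕ → ℝ := fun k => (4 * (k:ℝ) + c) * min ((2:ℝ)^k) (T / 2^(k+1)) with hBdef
  -- basic facts about the rectangle probabilities
  have hrect : ∀ k, ∀ a ∈ Finset.range (2^k),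
      0 ≤ (f ((2 * (a : ℝ) + 1) / 2 ^ (k + 1)) - f (((a : ℝ) + 1) / 2 ^ k)) / 2 ^ (k + 1) ∧
      (f ((2 * (a : ℝ) + 1) / 2 ^ (k + 1)) - f (((a : ℝ) + 1) / 2 ^ k)) / 2 ^ (k + 1) ≤ 1 := by
    intro k a ha
    simp only [Finset.mem_range] at ha
    have ha' : (a:ℝ) ≤ 2^k - 1 := by
      have : (a:ℝ) + 1 ≤ 2^k := by exact_mod_cast Nat.succ_le_of_lt ha
      linarith
    have h2k : (0:ℝ) < 2^k := by positivity
    have h2k1 : (0:ℝ) < 2^(k+1) := by positivity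
    have hpow : (2:ℝ)^(k+1) = 2 * 2^k := by ring
    set x1 : ℝ := (2 * (a : ℝ) + 1) / 2 ^ (k + 1) with hx1def
    set x2 : ℝ := ((a : ℝ) + 1) / 2 ^ k with hx2def
    have hx1pos : 0 < x1 := by rw [hx1def]; positivity
    have hx1le : x1 ≤ 1 := by
      rw [hx1def, div_le_one h2k1, hpow]; linarith
    have hx2pos : 0 < x2 := by rw [hx2def]; positivity
    have hx2le : x2 ≤ 1 := by
      rw [hx2def, div_le_one h2k]; linarith
    have hx12 : x1 ≤ x2 := by
      rw [hx1def, hx2def, div_le_div_iff₀ h2k1 h2k]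
      nlinarith
    have hfmono : f x2 ≤ f x1 := hf_anti ⟨hx1pos.le, hx1le⟩ ⟨hx2pos.le, hx2le⟩ hx12
    have hfx2 : 0 ≤ f x2 := hf_nonneg x2 ⟨hx2pos.le, hx2le⟩
    have hfx1 : 0 ≤ f x1 := le_trans hfx2 hfmono
    constructor
    · apply div_nonneg (by linarith) h2k1.le
    · have hx1f : x1 * f x1 ≤ 1 := xfx_le_one f hf_nonneg hf_anti hf_pdf hx1pos hx1le
      have hinv : (2^(k+1) : ℝ)⁻¹ ≤ x1 := by
        rw [hx1def, ← one_div]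
        gcongr
        · linarith
      calc (f x1 - f x2) / 2^(k+1) ≤ f x1 / 2^(k+1) := by
            gcongr
            · linarith
        _ = (2^(k+1):ℝ)⁻¹ * f x1 := by rw [div_eq_mul_inv]; ring
        _ ≤ x1 * f x1 := mul_le_mul_of_nonneg_right hinv hfx1
        _ ≤ 1 := hx1f
  -- telescoping mass bound
  have hmass : ∀ k, ∑ a ∈ Finset.range (2^k),
      (f ((2 * (a : ℝ) + 1) / 2 ^ (k + 1)) - f (((a : ℝ) + 1) / 2 ^ k)) / 2 ^ (k + 1)
      ≤ f 0 / 2^(k+1) := by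
    intro k
    have h2k : (0:ℝ) < 2^k := by positivity
    have h2k1 : (0:ℝ) < 2^(k+1) := by positivity
    have key : ∑ a ∈ Finset.range (2^k),
        (f ((2 * (a : ℝ) + 1) / 2 ^ (k + 1)) - f (((a : ℝ) + 1) / 2 ^ k)) ≤ f 0 := by
      have tel := Finset.sum_range_sub' (fun a : ℕ => f ((a:ℝ) / 2^k)) (2^k)
      have h0 : f (((0:ℕ):ℝ) / 2^k) = f 0 := by norm_num
      have h1 : f (((2^k:ℕ):ℝ) / 2^k) = f 1 := by
        rw [show ((2^k:ℕ):ℝ) / 2^k = 1 by push_cast; field_simp]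
      calc ∑ a ∈ Finset.range (2^k),
          (f ((2 * (a : ℝ) + 1) / 2 ^ (k + 1)) - f (((a : ℝ) + 1) / 2 ^ k))
          ≤ ∑ a ∈ Finset.range (2^k),
            (f ((a:ℝ) / 2^k) - f ((((a:ℕ)+1:ℕ):ℝ) / 2^k)) := by
            apply Finset.sum_le_sum
            intro a ha
            simp only [Finset.mem_range] at ha
            have ha' : (a:ℝ) + 1 ≤ 2^k := by exact_mod_cast Nat.succ_le_of_lt ha
            have hle : (a:ℝ)/2^k ≤ (2 * (a : ℝ) + 1) / 2 ^ (k + 1) := by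
              rw [div_le_div_iff₀ h2k h2k1, show (2:ℝ)^(k+1) = 2 * 2^k by ring]
              ring_nf; nlinarith
            have hmem1 : (a:ℝ)/2^k ∈ Set.Icc (0:ℝ) 1 := by
              constructor
              · positivity
              · rw [div_le_one h2k]; linarith
            have hmem2 : (2 * (a : ℝ) + 1) / 2 ^ (k + 1) ∈ Set.Icc (0:ℝ) 1 := by
              constructor
              · positivity
              · rw [div_le_one h2k1, show (2:ℝ)^(k+1) = 2 * 2^k by ring]; linarith
            have := hf_anti hmem1 hmem2 hle
            push_cast
            linarith
        _ = f 0 - f 1 := by rw [← h0, ← h1, ← tel]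
        _ ≤ f 0 := by linarith
    calc ∑ a ∈ Finset.range (2^k),
        (f ((2 * (a : ℝ) + 1) / 2 ^ (k + 1)) - f (((a : ℝ) + 1) / 2 ^ k)) / 2 ^ (k + 1)
        = (∑ a ∈ Finset.range (2^k),
          (f ((2 * (a : ℝ) + 1) / 2 ^ (k + 1)) - f (((a : ℝ) + 1) / 2 ^ k))) / 2^(k+1) := by
          rw [Finset.sum_div]
      _ ≤ f 0 / 2^(k+1) := by gcongr
  -- per-level bound
  have hgB : ∀ k, g k ≤ B k := by
    intro k
    rw [hgdef, hBdef]
    simp only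
    have h2k : (0:ℝ) < 2^k := by positivity
    have h2k1 : (0:ℝ) < 2^(k+1) := by positivity
    have hcoef : ∀ a ∈ Finset.range (2^k),
        shiftedEliasGammaLen (k+1) + shiftedEliasGammaLen a + 2 * Real.logb 2 (n:ℝ) + 1
          ≤ 4 * (k:ℝ) + c := by
      intro a ha
      simp only [Finset.mem_range] at ha
      have h1 : shiftedEliasGammaLen (k+1) ≤ 2 * ((k:ℝ)+1) + 1 := by
        have := shifted_le (m := k+1) (M := k+1) (by
          have := Nat.lt_two_pow_self (n := k+1); omega)
        push_cast at this ⊢; linarith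
      have h2 : shiftedEliasGammaLen a ≤ 2 * (k:ℝ) + 1 := by
        have := shifted_le (m := a) (M := k) (by omega)
        push_cast at this ⊢; linarith
      rw [hcdef, hDdef]; linarith
    calc ∑ a ∈ Finset.range (2 ^ k),
        rectCost n (shiftedEliasGammaLen (k + 1)) (shiftedEliasGammaLen a)
          ((f ((2 * (a : ℝ) + 1) / 2 ^ (k + 1)) - f (((a : ℝ) + 1) / 2 ^ k)) / 2 ^ (k + 1))
        ≤ ∑ a ∈ Finset.range (2 ^ k), (4 * (k:ℝ) + c) *
            min 1 ((n:ℝ) * ((f ((2 * (a : ℝ) + 1) / 2 ^ (k + 1)) - f (((a : ℝ) + 1) / 2 ^ k)) / 2 ^ (k + 1))) := by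
          apply Finset.sum_le_sum
          intro a ha
          obtain ⟨hp0, hp1⟩ := hrect k a ha
          refine le_trans (rectCost_le n hn (shifted_nonneg _) (shifted_nonneg _) hp0 hp1) ?_
          exact mul_le_mul_of_nonneg_right (hcoef a ha) (le_min (by norm_num) (by positivity))
      _ = (4 * (k:ℝ) + c) * ∑ a ∈ Finset.range (2 ^ k),
            min 1 ((n:ℝ) * ((f ((2 * (a : ℝ) + 1) / 2 ^ (k + 1)) - f (((a : ℝ) + 1) / 2 ^ k)) / 2 ^ (k + 1))) := by
          rw [Finset.mul_sum]
      _ ≤ (4 * (k:ℝ) + c) * min ((2:ℝ)^k) (T / 2^(k+1)) := by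
          apply mul_le_mul_of_nonneg_left ?_ (by positivity)
          apply le_min
          · calc ∑ a ∈ Finset.range (2 ^ k),
                min 1 ((n:ℝ) * ((f ((2 * (a : ℝ) + 1) / 2 ^ (k + 1)) - f (((a : ℝ) + 1) / 2 ^ k)) / 2 ^ (k + 1)))
                ≤ ∑ _a ∈ Finset.range (2 ^ k), (1:ℝ) :=
                  Finset.sum_le_sum (fun a _ => min_le_left _ _)
              _ = (2:ℝ)^k := by simp
          · calc ∑ a ∈ Finset.range (2 ^ k),
                min 1 ((n:ℝ) * ((f ((2 * (a : ℝ) + 1) / 2 ^ (k + 1)) - f (((a : ℝ) + 1) / 2 ^ k)) / 2 ^ (k + 1)))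
                ≤ ∑ a ∈ Finset.range (2 ^ k),
                  (n:ℝ) * ((f ((2 * (a : ℝ) + 1) / 2 ^ (k + 1)) - f (((a : ℝ) + 1) / 2 ^ k)) / 2 ^ (k + 1)) :=
                  Finset.sum_le_sum (fun a _ => min_le_right _ _)
              _ = (n:ℝ) * ∑ a ∈ Finset.range (2 ^ k),
                  ((f ((2 * (a : ℝ) + 1) / 2 ^ (k + 1)) - f (((a : ℝ) + 1) / 2 ^ k)) / 2 ^ (k + 1)) := by
                  rw [Finset.mul_sum]
              _ ≤ (n:ℝ) * (f 0 / 2^(k+1)) :=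
                  mul_le_mul_of_nonneg_left (hmass k) (by positivity)
              _ = T / 2^(k+1) := by rw [hTdef]; ring
  have hg0 : ∀ k, 0 ≤ g k := by
    intro k
    rw [hgdef]
    apply Finset.sum_nonneg
    intro a ha
    obtain ⟨hp0, hp1⟩ := hrect k a ha
    exact rectCost_nonneg n (shifted_nonneg _) (shifted_nonneg _) hp0 hp1
  -- summability of the bounding sequence
  have hhalf : ‖(1/2 : ℝ)‖ < 1 := by
    rw [Real.norm_eq_abs, abs_of_pos (by norm_num : (0:ℝ) < 1/2)]
    norm_num
  have hs1 : Summable (fun j : ℕ => (j:ℝ) * (1/2:ℝ)^j) := by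
    have := summable_pow_mul_geometric_of_norm_lt_one (R := ℝ) 1 hhalf
    simpa using this
  have hs2 : Summable (fun j : ℕ => (1/2:ℝ)^j) :=
    summable_geometric_of_lt_one (r := (1/2:ℝ)) one_half_pos.le one_half_lt_one
  have hident : ∀ k : ℕ, (4*(k:ℝ)+c)*(T/2^(k+1))
      = 2*T*((k:ℝ)*(1/2:ℝ)^k) + (c*T/2)*((1/2:ℝ)^k) := by
    intro k
    rw [show (1/2:ℝ)^k = ((2:ℝ)^k)⁻¹ by rw [one_div, inv_pow]]
    rw [show (2:ℝ)^(k+1) = 2^k * 2 by ring]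
    field_simp
    ring
  have hB0 : ∀ k : ℕ, 0 ≤ B k := by
    intro k
    rw [hBdef]
    exact mul_nonneg (add_nonneg (by positivity) hc0) (le_min (by positivity) (by positivity))
  have hBle : ∀ k : ℕ, B k ≤ 2*T*((k:ℝ)*(1/2:ℝ)^k) + (c*T/2)*((1/2:ℝ)^k) := by
    intro k
    rw [hBdef, ← hident k]
    exact mul_le_mul_of_nonneg_left (min_le_right _ _) (add_nonneg (by positivity) hc0)
  have hBsum : Summable B :=
    Summable.of_nonneg_of_le hB0 hBle ((hs1.mul_left (2*T)).add (hs2.mul_left (c*T/2)))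
  -- the cutoff level
  set K : ℕ := ⌊Real.logb 2 S⌋₊ + 1 with hKdef
  have hK1 : S ≤ 2^K := by
    have h1 : Real.logb 2 S ≤ (K:ℝ) := by
      have := Nat.lt_floor_add_one (Real.logb 2 S)
      rw [hKdef]; push_cast; linarith
    calc S = (2:ℝ) ^ (Real.logb 2 S) := (Real.rpow_logb two_pos (by norm_num) (by linarith)).symm
      _ ≤ (2:ℝ) ^ ((K:ℕ):ℝ) := (Real.rpow_le_rpow_left_iff one_lt_two).2 h1
      _ = (2:ℝ)^K := Real.rpow_natCast 2 K
  have hK2 : (2:ℝ)^K ≤ 2 * S := by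
    have h1 : (K:ℝ) ≤ Real.logb 2 S + 1 := by
      rw [hKdef]; push_cast
      have := Nat.floor_le hlogS0; linarith
    calc (2:ℝ)^K = (2:ℝ) ^ ((K:ℕ):ℝ) := (Real.rpow_natCast 2 K).symm
      _ ≤ (2:ℝ) ^ (Real.logb 2 S + 1) := (Real.rpow_le_rpow_left_iff one_lt_two).2 h1
      _ = (2:ℝ) ^ (Real.logb 2 S) * 2 := by rw [Real.rpow_add two_pos, Real.rpow_one]
      _ = 2 * S := by rw [Real.rpow_logb two_pos (by norm_num) (by linarith)]; ring
  have hKμ : (K:ℝ) ≤ μ + 1 := by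
    rw [hKdef]; push_cast
    have := Nat.floor_le hlogS0; linarith
  -- head of the series
  have hhead : ∑ i ∈ Finset.range K, B i ≤ (4*(K:ℝ)+c) * (2*S) := by
    calc (∑ i ∈ Finset.range K, B i) ≤ ∑ i ∈ Finset.range K, ((4*(K:ℝ)+c) * 2^i) := by
          apply Finset.sum_le_sum
          intro i hi
          simp only [Finset.mem_range] at hi
          rw [hBdef]
          have h2 : (4*(i:ℝ)+c) ≤ 4*(K:ℝ)+c := by
            have : (i:ℝ) ≤ (K:ℝ) := by exact_mod_cast hi.le
            linarith
          calc (4*(i:ℝ)+c) * min ((2:ℝ)^i) (T/2^(i+1)) ≤ (4*(i:ℝ)+c) * 2^i :=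
              mul_le_mul_of_nonneg_left (min_le_left _ _) (add_nonneg (by positivity) hc0)
            _ ≤ (4*(K:ℝ)+c) * 2^i := mul_le_mul_of_nonneg_right h2 (by positivity)
      _ = (4*(K:ℝ)+c) * ∑ i ∈ Finset.range K, (2:ℝ)^i := by rw [Finset.mul_sum]
      _ ≤ (4*(K:ℝ)+c) * 2^K := by
          apply mul_le_mul_of_nonneg_left ?_ (add_nonneg (by positivity) hc0)
          calc ∑ i ∈ Finset.range K, (2:ℝ)^i = (2^K - 1)/(2-1) := geom_sum_eq (by norm_num) K
            _ ≤ 2^K := by norm_num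
      _ ≤ (4*(K:ℝ)+c) * (2*S) :=
          mul_le_mul_of_nonneg_left hK2 (add_nonneg (by positivity) hc0)
  -- tail of the series
  have htail : ∑' j : ℕ, B (j + K) ≤ S * (4*(K:ℝ)+c+4) := by
    have hW : ∀ j : ℕ, B (j + K) ≤ ((4*(K:ℝ)+c) * (T/2^(K+1))) * (1/2:ℝ)^j
        + (4*(T/2^(K+1))) * ((j:ℝ)*(1/2:ℝ)^j) := by
      intro j
      rw [hBdef]
      have h2 : (0:ℝ) ≤ 4*(((j+K:ℕ)):ℝ)+c := add_nonneg (by positivity) hc0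
      calc (4*(((j+K:ℕ)):ℝ)+c) * min ((2:ℝ)^(j+K)) (T/2^(j+K+1))
          ≤ (4*(((j+K:ℕ)):ℝ)+c) * (T/2^(j+K+1)) :=
            mul_le_mul_of_nonneg_left (min_le_right _ _) h2
        _ = ((4*(K:ℝ)+c) * (T/2^(K+1))) * (1/2:ℝ)^j + (4*(T/2^(K+1))) * ((j:ℝ)*(1/2:ℝ)^j) := by
            push_cast
            rw [show (1/2:ℝ)^j = ((2:ℝ)^j)⁻¹ by rw [one_div, inv_pow]]
            rw [show (2:ℝ)^(j+K+1) = 2^j * 2^(K+1) by ring]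
            field_simp
            ring
    have hsum1 : Summable (fun j : ℕ => ((4*(K:ℝ)+c) * (T/2^(K+1))) * (1/2:ℝ)^j) :=
      hs2.mul_left _
    have hsum2 : Summable (fun j : ℕ => (4*(T/2^(K+1))) * ((j:ℝ)*(1/2:ℝ)^j)) :=
      hs1.mul_left _
    have hBtail : Summable (fun j : ℕ => B (j + K)) := (summable_nat_add_iff K).2 hBsum
    have hgeo1 : ∑' j : ℕ, (1/2:ℝ)^j = 2 := by
      rw [tsum_geometric_of_lt_one (by norm_num) (by norm_num)]; norm_num
    have hgeo2 : ∑' j : ℕ, ((j:ℝ)*(1/2:ℝ)^j) = 2 := by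
      rw [tsum_coe_mul_geometric_of_norm_lt_one hhalf]; norm_num
    calc ∑' j : ℕ, B (j + K)
        ≤ ∑' j : ℕ, (((4*(K:ℝ)+c) * (T/2^(K+1))) * (1/2:ℝ)^j
            + (4*(T/2^(K+1))) * ((j:ℝ)*(1/2:ℝ)^j)) :=
          Summable.tsum_le_tsum hW hBtail (hsum1.add hsum2)
      _ = ((4*(K:ℝ)+c) * (T/2^(K+1))) * (∑' j : ℕ, (1/2:ℝ)^j)
            + (4*(T/2^(K+1))) * ∑' j : ℕ, ((j:ℝ)*(1/2:ℝ)^j) := by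
          rw [Summable.tsum_add hsum1 hsum2, tsum_mul_left, tsum_mul_left]
      _ = (T/2^K) * (4*(K:ℝ)+c+4) := by
          rw [hgeo1, hgeo2, show (2:ℝ)^(K+1) = 2^K * 2 by ring]
          field_simp
      _ ≤ S * (4*(K:ℝ)+c+4) := by
          have hTS : T/2^K ≤ S := by
            rw [div_le_iff₀ (by positivity)]
            calc T = S * S := hSS.symm
              _ ≤ S * 2^K := mul_le_mul_of_nonneg_left hK1 hS0
          exact mul_le_mul_of_nonneg_right hTS
            (add_nonneg (add_nonneg (by positivity) hc0) (by norm_num))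
  -- assemble the series bound
  have hgsum : Summable g := Summable.of_nonneg_of_le hg0 hgB hBsum
  have htsum : ∑' k, g k ≤ ∑' k, B k := Summable.tsum_le_tsum hgB hgsum hBsum
  have hsplit := Summable.sum_add_tsum_nat_add K hBsum
  have hBtotal : ∑' k, B k ≤ (4*(K:ℝ)+c) * (2*S) + S * (4*(K:ℝ)+c+4) := by
    rw [← hsplit]; exact add_le_add hhead htail
  -- the (0,0) rectangle
  have htop : rectCost n (shiftedEliasGammaLen 0) (shiftedEliasGammaLen 0) (f 1) ≤ D + 2 := by
    have h := rectCost_le n hn (shifted_nonneg 0) (shifted_nonneg 0) hf1_ge hf1_le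
    rw [shifted_zero] at h
    calc rectCost n (shiftedEliasGammaLen 0) (shiftedEliasGammaLen 0) (f 1)
        = rectCost n 1 1 (f 1) := by rw [shifted_zero]
      _ ≤ (1+1+2*Real.logb 2 (n:ℝ) + 1) * min 1 ((n:ℝ)*f 1) := h
      _ ≤ (1+1+2*Real.logb 2 (n:ℝ) + 1) * 1 := by
          apply mul_le_mul_of_nonneg_left (min_le_left _ _)
          have : (0:ℝ) ≤ Real.logb 2 (n:ℝ) := Real.logb_nonneg one_lt_two hn1
          linarith
      _ = D + 2 := by rw [hDdef]; ring
  -- final arithmetic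
  have h1 : (4*(K:ℝ)+c) * (2*S) ≤ (8*μ+9) * (2*S) := by
    apply mul_le_mul_of_nonneg_right ?_ (by positivity)
    rw [hcdef, hDdef]; linarith
  have h2 : S * (4*(K:ℝ)+c+4) ≤ S * (8*μ+13) := by
    apply mul_le_mul_of_nonneg_left ?_ hS0
    rw [hcdef, hDdef]; linarith
  have h3 : D + 2 ≤ (4*μ+3) * S := by
    have hd : D + 2 ≤ 4*μ+3 := by rw [hDdef]; linarith
    nlinarith
  have hfin : (4*μ+3)*S + ((8*μ+9) * (2*S) + S * (8*μ+13)) ≤ 92 * S * μ := by nlinarith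
  linarith
end

section
/- Let c > 1 and λ > 1 be reals and let f : [0,∞) → [0,∞) be a non-increasing probability density function (∫₀^∞ f(t) dt = 1) satisfying ∫_x^∞ f(t) dt ≤ c·x^(−λ) for all x > 0. Let t₀ = (c·(λ+1))^(1/λ) and define f* : [0,∞) → ℝ by f*(x) = c·λ·t₀^(−λ−1) for x ≤ t₀ and f*(x) = c·λ·x^(−λ−1) for x > t₀. Then f majorizes f*, that is, ∫₀^x f(t) dt ≥ ∫₀^x f*(t) dt for every x ≥ 0. -/
open MeasureTheory

/-- The comparison density `f*`: with `t₀ = (c(λ+1))^{1/λ}`, `f*(x) = cλ·t₀^{-λ-1}`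
for `x ≤ t₀` and `f*(x) = cλ·x^{-λ-1}` for `x > t₀`. -/
noncomputable def fstar (c lam : ℝ) (x : ℝ) : ℝ :=
  if x ≤ (c * (lam + 1)) ^ (1 / lam) then
    c * lam * ((c * (lam + 1)) ^ (1 / lam)) ^ (-lam - 1)
  else c * lam * x ^ (-lam - 1)

/-- Chebyshev-type inequality for antitone functions. -/
lemma cheb_aux (f : ℝ → ℝ) (hf_anti : AntitoneOn f (Set.Ici (0 : ℝ)))
    {x y : ℝ} (hx : 0 ≤ x) (hxy : x ≤ y) :
    x * ∫ t in (0:ℝ)..y, f t ≤ y * ∫ t in (0:ℝ)..x, f t := by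
  have hint1 : IntervalIntegrable f volume 0 x := by
    apply AntitoneOn.intervalIntegrable
    apply hf_anti.mono
    rw [Set.uIcc_of_le hx]
    exact Set.Icc_subset_Ici_self
  have hint2 : IntervalIntegrable f volume x y := by
    apply AntitoneOn.intervalIntegrable
    apply hf_anti.mono
    rw [Set.uIcc_of_le hxy]
    exact fun t ht => hx.trans ht.1
  set A := ∫ t in (0:ℝ)..x, f t with hA
  set B := ∫ t in x..y, f t with hB
  have hAB : A + B = ∫ t in (0:ℝ)..y, f t :=
    intervalIntegral.integral_add_adjacent_intervals hint1 hint2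
  have hA_ge : x * f x ≤ A := by
    have := intervalIntegral.integral_mono_on hx
      (intervalIntegrable_const (c := f x)) hint1
      (fun t ht => hf_anti (Set.mem_Ici.2 ht.1) (Set.mem_Ici.2 hx) ht.2)
    simpa using this
  have hB_le : B ≤ (y - x) * f x := by
    have := intervalIntegral.integral_mono_on hxy hint2
      (intervalIntegrable_const (c := f x))
      (fun t ht => hf_anti (Set.mem_Ici.2 hx) (Set.mem_Ici.2 (hx.trans ht.1)) ht.1)
    simpa [mul_comm] using this
  rw [← hAB]
  nlinarith [mul_nonneg (sub_nonneg.2 hxy) (sub_nonneg.2 hA_ge),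
    mul_nonneg hx (sub_nonneg.2 hB_le)]

/-- Splitting the total integral at `x`. -/
lemma split_aux (f : ℝ → ℝ) (hf_int : IntegrableOn f (Set.Ioi (0 : ℝ)))
    {x : ℝ} (hx : 0 < x) :
    ∫ t in Set.Ioi (0:ℝ), f t = (∫ t in (0:ℝ)..x, f t) + ∫ t in Set.Ioi x, f t := by
  rw [intervalIntegral.integral_of_le hx.le]
  rw [← MeasureTheory.setIntegral_union (Set.Ioc_disjoint_Ioi le_rfl)
    measurableSet_Ioi
    (hf_int.mono_set Set.Ioc_subset_Ioi_self)
    (hf_int.mono_set (Set.Ioi_subset_Ioi hx.le))]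
  rw [Set.Ioc_union_Ioi_eq_Ioi hx.le]

/-- Any non-increasing pdf `f` on `[0,∞)` with tail bound
`∫_x^∞ f(t) dt ≤ c·x^{-λ}` majorizes the density `f*`, i.e.,
`∫₀^x f ≥ ∫₀^x f*` for every `x ≥ 0`. -/
theorem pdf_majorizes_fstar
    (c lam : ℝ) (hc : 1 < c) (hlam : 1 < lam)
    (f : ℝ → ℝ) (hf_nonneg : ∀ x, 0 ≤ f x)
    (hf_anti : AntitoneOn f (Set.Ici (0 : ℝ)))
    (hf_int : IntegrableOn f (Set.Ioi (0 : ℝ)))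
    (hf_pdf : ∫ t in Set.Ioi (0 : ℝ), f t = 1)
    (htail : ∀ x : ℝ, 0 < x → ∫ t in Set.Ioi x, f t ≤ c * x ^ (-lam)) :
    ∀ x : ℝ, 0 ≤ x → ∫ t in (0 : ℝ)..x, fstar c lam t ≤ ∫ t in (0 : ℝ)..x, f t := by
  have hc0 : (0:ℝ) < c := lt_trans one_pos hc
  have hlam0 : (0:ℝ) < lam := lt_trans one_pos hlam
  have hA0 : (0:ℝ) < c * (lam + 1) := by positivity
  set t0 : ℝ := (c * (lam + 1)) ^ (1 / lam) with ht0def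
  have ht0 : (0:ℝ) < t0 := Real.rpow_pos_of_pos hA0 _
  have ht0lam : t0 ^ (-lam) = (c * (lam + 1))⁻¹ := by
    rw [ht0def, ← Real.rpow_mul hA0.le]
    rw [show (1/lam) * (-lam) = -1 by field_simp]
    exact Real.rpow_neg_one _
  set K : ℝ := c * lam * t0 ^ (-lam - 1) with hKdef
  have hKsplit : t0 ^ (-lam - 1) = t0 ^ (-lam) * t0⁻¹ := by
    rw [show (-lam - 1 : ℝ) = -lam + (-1) by ring, Real.rpow_add ht0, Real.rpow_neg_one]
  have ht0K : t0 * K = lam / (lam + 1) := by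
    rw [hKdef, hKsplit, ht0lam]
    field_simp
  -- lower bound for ∫₀^z f
  have hlow : ∀ z : ℝ, 0 < z → 1 - c * z ^ (-lam) ≤ ∫ t in (0:ℝ)..z, f t := by
    intro z hz
    have hs := split_aux f hf_int hz
    rw [hf_pdf] at hs
    have := htail z hz
    linarith
  have ht0tail : t0 * K ≤ ∫ t in (0:ℝ)..t0, f t := by
    have := hlow t0 ht0
    rw [ht0lam] at this
    rw [ht0K]
    have hc' : c * (c * (lam + 1))⁻¹ = 1 / (lam + 1) := by
      field_simp
    rw [hc'] at this
    have : 1 - 1 / (lam + 1) = lam / (lam + 1) := by field_simp; ring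
    linarith [hlow t0 ht0, this]
  intro x hx
  rcases eq_or_lt_of_le hx with h0 | hxpos
  · rw [← h0]
    simp
  by_cases hxt0 : x ≤ t0
  · -- constant part
    have hconst : Set.EqOn (fstar c lam) (fun _ => K) (Set.uIcc 0 x) := by
      intro t ht
      rw [Set.uIcc_of_le hx] at ht
      have : t ≤ t0 := ht.2.trans hxt0
      simp only [fstar, ← ht0def, if_pos this]
      exact hKdef.symm
    rw [intervalIntegral.integral_congr hconst, intervalIntegral.integral_const,
      smul_eq_mul, sub_zero]
    have hcheb := cheb_aux f hf_anti hx hxt0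
    have h2 : x * (t0 * K) ≤ x * ∫ t in (0:ℝ)..t0, f t :=
      mul_le_mul_of_nonneg_left ht0tail hx
    have h3 : x * (t0 * K) ≤ t0 * ∫ t in (0:ℝ)..x, f t := le_trans h2 hcheb
    have := (mul_le_mul_iff_right₀ ht0).1 (by linarith [h3] : t0 * (x * K) ≤ t0 * ∫ t in (0:ℝ)..x, f t)
    exact this
  · push_neg at hxt0
    -- split the fstar integral at t0
    have h0notin : (0:ℝ) ∉ Set.uIcc t0 x := by
      rw [Set.uIcc_of_le hxt0.le]
      intro h
      exact absurd h.1 (not_le.2 ht0)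
    have hrint : IntervalIntegrable (fun t => c * lam * t ^ (-lam - 1)) volume t0 x :=
      (intervalIntegral.intervalIntegrable_rpow (Or.inr h0notin)).const_mul _
    have heq2 : Set.EqOn (fstar c lam) (fun t => c * lam * t ^ (-lam - 1))
        (Set.uIcc t0 x) := by
      intro t ht
      rw [Set.uIcc_of_le hxt0.le] at ht
      simp only [fstar, ← ht0def]
      split_ifs with h
      · have : t = t0 := le_antisymm h ht.1
        rw [this]
      · rfl
    have hconst : Set.EqOn (fstar c lam) (fun _ => K) (Set.uIcc 0 t0) := by
      intro t ht
      rw [Set.uIcc_of_le ht0.le] at ht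
      simp only [fstar, ← ht0def, if_pos ht.2]
      exact hKdef.symm
    have hInt1 : IntervalIntegrable (fstar c lam) volume 0 t0 := by
      rw [intervalIntegrable_iff_integrableOn_Ioc_of_le ht0.le]
      exact (integrableOn_const_iff (C := K)).2 (Or.inr measure_Ioc_lt_top) |>.congr_fun
        (fun t ht => (hconst (by rw [Set.uIcc_of_le ht0.le]; exact Set.Ioc_subset_Icc_self ht)).symm)
        measurableSet_Ioc
    have hInt2 : IntervalIntegrable (fstar c lam) volume t0 x := by
      rw [intervalIntegrable_iff_integrableOn_Ioc_of_le hxt0.le]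
      refine ((intervalIntegrable_iff_integrableOn_Ioc_of_le hxt0.le).1 hrint).congr_fun
        (fun t ht => (heq2 (by rw [Set.uIcc_of_le hxt0.le]; exact Set.Ioc_subset_Icc_self ht)).symm)
        measurableSet_Ioc
    have hsum : ∫ t in (0:ℝ)..x, fstar c lam t
        = (∫ t in (0:ℝ)..t0, fstar c lam t) + ∫ t in t0..x, fstar c lam t :=
      (intervalIntegral.integral_add_adjacent_intervals hInt1 hInt2).symm
    have hI1 : ∫ t in (0:ℝ)..t0, fstar c lam t = t0 * K := by
      rw [intervalIntegral.integral_congr hconst, intervalIntegral.integral_const,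
        smul_eq_mul, sub_zero]
    have hI2 : ∫ t in t0..x, fstar c lam t
        = c * lam * ((x ^ (-lam) - t0 ^ (-lam)) / (-lam)) := by
      rw [intervalIntegral.integral_congr heq2, intervalIntegral.integral_const_mul,
        integral_rpow (Or.inr ⟨by linarith, h0notin⟩)]
      norm_num
    have hval : ∫ t in (0:ℝ)..x, fstar c lam t = 1 - c * x ^ (-lam) := by
      rw [hsum, hI1, hI2, ht0K, ht0lam]
      field_simp
      ring
    rw [hval]
    exact hlow x (lt_trans ht0 hxt0)
end

section
/- Let f, g : [0,∞) → [0,∞) be non-increasing integrable functions with ∫₀^x f(t) dt ≤ ∫₀^x g(t) dt for every x ≥ 0 and with ∫₀^∞ f(t) dt = ∫₀^∞ g(t) dt (finite). Then for every concave function φ : [0,∞) → ℝ with φ(0) = 0 such that φ∘f and φ∘g are integrable on [0,∞), one has ∫₀^∞ φ(f(t)) dt ≥ ∫₀^∞ φ(g(t)) dt. -/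
open MeasureTheory


noncomputable def sg (φ : ℝ → ℝ) (a : ℝ) : ℝ :=
  sSup ((fun y => (φ y - φ a) / (y - a)) '' Set.Ioi a)

section sgLemmas

variable {φ : ℝ → ℝ} (hφ : ConcaveOn ℝ (Set.Ici (0:ℝ)) φ) {a : ℝ} (ha : 0 < a)
include hφ ha

lemma sg_bddAbove :
    BddAbove ((fun y => (φ y - φ a) / (y - a)) '' Set.Ioi a) := by
  refine ⟨(φ a - φ (a/2)) / (a - a/2), ?_⟩
  rintro _ ⟨y, hy, rfl⟩
  exact hφ.slope_anti_adjacent (by positivity : (0:ℝ) ≤ a/2) (by linarith [hy.out] : (0:ℝ) ≤ y)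
    (by linarith) hy.out

lemma slope_le_sg {y : ℝ} (hy : a < y) : (φ y - φ a) / (y - a) ≤ sg φ a :=
  le_csSup (sg_bddAbove hφ ha) (Set.mem_image_of_mem _ hy)

lemma sg_le_slope_left {x : ℝ} (hx : 0 ≤ x) (hxa : x < a) :
    sg φ a ≤ (φ a - φ x) / (a - x) := by
  refine csSup_le (⟨_, Set.mem_image_of_mem _ (lt_add_one a)⟩) ?_
  rintro _ ⟨y, hy, rfl⟩
  exact hφ.slope_anti_adjacent hx (by linarith [hy.out] : (0:ℝ) ≤ y) hxa hy.out

lemma sg_supergrad {y : ℝ} (hy : 0 ≤ y) : φ y - φ a ≤ sg φ a * (y - a) := by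
  rcases lt_trichotomy a y with h | h | h
  · have := slope_le_sg hφ ha h
    rw [div_le_iff₀ (by linarith)] at this
    linarith
  · simp [h]
  · have := sg_le_slope_left hφ ha hy h
    rw [le_div_iff₀ (by linarith)] at this
    nlinarith

lemma sg_anti {b : ℝ} (hab : a < b) : sg φ b ≤ sg φ a := by
  calc sg φ b ≤ (φ b - φ a) / (b - a) := sg_le_slope_left hφ (ha.trans hab) ha.le hab
    _ ≤ sg φ a := slope_le_sg hφ ha hab

lemma sg_mul_le (hφ0 : φ 0 = 0) : sg φ a * a ≤ φ a := by
  have := sg_supergrad hφ ha (le_refl (0:ℝ))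
  rw [hφ0] at this; nlinarith

end sgLemmas

/-- integral of an integrable function over (the trace on `Ioc 0 X` of) a lower set
is nonneg, given all initial integrals are nonneg. -/
lemma lowerset_integral_nonneg (k : ℝ → ℝ) {X : ℝ}
    (hK : ∀ b ∈ Set.Icc (0:ℝ) X, 0 ≤ ∫ t in Set.Ioc (0:ℝ) b, k t)
    (A : Set ℝ) (hlow : ∀ u v : ℝ, u ≤ v → v ∈ A → u ∈ A) :
    0 ≤ ∫ t in Set.Ioc (0:ℝ) X ∩ A, k t := by
  set E := Set.Ioc (0:ℝ) X ∩ A with hE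
  rcases E.eq_empty_or_nonempty with h | h
  · rw [h]; simp
  · have hbdd : BddAbove E := ⟨X, fun t ht => ht.1.2⟩
    set b := sSup E with hb
    have hbX : b ≤ X := csSup_le h (fun t ht => ht.1.2)
    have hb0 : 0 < b := by
      obtain ⟨e, he⟩ := h
      exact lt_of_lt_of_le he.1.1 (le_csSup hbdd he)
    have h1 : E ⊆ Set.Ioc 0 b := fun t ht => ⟨ht.1.1, le_csSup hbdd ht⟩
    have h2 : Set.Ioo 0 b ⊆ E := by
      intro t ht
      obtain ⟨u, hu, htu⟩ := exists_lt_of_lt_csSup h ht.2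
      exact ⟨⟨ht.1, htu.le.trans hu.1.2⟩, hlow t u htu.le hu.2⟩
    have heq : E =ᵐ[volume] Set.Ioc 0 b := by
      rw [MeasureTheory.ae_eq_set]
      constructor
      · rw [Set.diff_eq_empty.mpr h1]; simp
      · refine measure_mono_null ?_ (measure_singleton b)
        intro x hx
        rcases hx with ⟨hx1, hx2⟩
        by_contra hxb
        exact hx2 (h2 ⟨hx1.1, lt_of_le_of_ne hx1.2 hxb⟩)
    calc (0:ℝ) ≤ ∫ t in Set.Ioc (0:ℝ) b, k t := hK b ⟨hb0.le, hbX⟩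
      _ = ∫ t in E, k t := (setIntegral_congr_set heq).symm

lemma abel_ineq (c k : ℝ → ℝ) {X : ℝ} (hX : 0 < X) (hc : Monotone c)
    (hkm : Measurable k)
    (hk : IntegrableOn k (Set.Ioc (0:ℝ) X))
    (hK : ∀ b ∈ Set.Icc (0:ℝ) X, 0 ≤ ∫ t in Set.Ioc (0:ℝ) b, k t) :
    ∫ t in Set.Ioc (0:ℝ) X, c t * k t ≤ c X * ∫ t in Set.Ioc (0:ℝ) X, k t := by
  have cmeas : Measurable c := hc.measurable
  set μ := volume.restrict (Set.Ioc (0:ℝ) X) with hμ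
  set ν := volume.restrict (Set.Ico (c 0) (c X)) with hν
  haveI : IsFiniteMeasure ν := by
    constructor
    rw [hν, Measure.restrict_apply_univ, Real.volume_Ico]
    exact ENNReal.ofReal_lt_top
  set F : ℝ × ℝ → ℝ := fun p => if c p.1 ≤ p.2 then k p.1 else 0 with hF
  have hFmeas : Measurable F := by
    exact Measurable.ite (measurableSet_le (cmeas.comp measurable_fst) measurable_snd)
      (hkm.comp measurable_fst) measurable_const
  -- integrability of F on the product
  have hinner : ∀ t : ℝ, Integrable (fun s => F (t, s)) ν := by
    intro t
    have : (fun s => F (t, s)) = Set.indicator (Set.Ici (c t)) (fun _ => k t) := by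
      funext s
      by_cases h : c t ≤ s <;> simp [hF, Set.indicator_apply, Set.mem_Ici, h]
    rw [this]
    exact (integrable_const (k t)).indicator measurableSet_Ici
  have hFint : Integrable F (μ.prod ν) := by
    rw [integrable_prod_iff hFmeas.aestronglyMeasurable]
    refine ⟨Filter.Eventually.of_forall hinner, ?_⟩
    have hbound : ∀ t : ℝ, ∫ s, ‖F (t, s)‖ ∂ν ≤ ‖k t‖ * (ν Set.univ).toReal := by
      intro t
      calc ∫ s, ‖F (t, s)‖ ∂ν ≤ ∫ _ , ‖k t‖ ∂ν := by
            refine integral_mono (hinner t).norm (integrable_const _) ?_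
            intro s
            simp only [hF]
            by_cases h : c t ≤ s <;> simp [h]
        _ = ‖k t‖ * (ν Set.univ).toReal := by rw [integral_const, smul_eq_mul, mul_comm]; rfl
    refine Integrable.mono' ((hk.norm.mul_const ((ν Set.univ).toReal))) ?_ ?_
    · exact (hFmeas.aestronglyMeasurable.norm.integral_prod_right')
    · refine Filter.Eventually.of_forall fun t => ?_
      rw [Real.norm_eq_abs, abs_of_nonneg (integral_nonneg fun s => norm_nonneg _)]
      exact hbound t
  -- compute the double integral two ways
  have way1 : ∫ p, F p ∂(μ.prod ν) = ∫ t in Set.Ioc (0:ℝ) X, k t * (c X - c t) := by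
    rw [integral_prod F hFint]
    refine setIntegral_congr_fun measurableSet_Ioc fun t ht => ?_
    have h1 : (fun s => F (t, s)) = Set.indicator (Set.Ici (c t)) (fun _ => k t) := by
      funext s
      by_cases h : c t ≤ s <;> simp [hF, Set.indicator_apply, Set.mem_Ici, h]
    have hc0t : c 0 ≤ c t := hc ht.1.le
    have hctX : c t ≤ c X := hc ht.2
    rw [h1, integral_indicator measurableSet_Ici]
    rw [hν, Measure.restrict_restrict measurableSet_Ici]
    have : Set.Ici (c t) ∩ Set.Ico (c 0) (c X) = Set.Ico (c t) (c X) := by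
      ext s; simp only [Set.mem_inter_iff, Set.mem_Ici, Set.mem_Ico]
      constructor
      · rintro ⟨h1', h2', h3'⟩; exact ⟨h1', h3'⟩
      · rintro ⟨h1', h2'⟩; exact ⟨h1', hc0t.trans h1', h2'⟩
    rw [this, setIntegral_const, measureReal_def, Real.volume_Ico, ENNReal.toReal_ofReal (by linarith), smul_eq_mul]
    ring
  have way2 : 0 ≤ ∫ p, F p ∂(μ.prod ν) := by
    rw [integral_prod_symm F hFint]
    refine integral_nonneg fun s => ?_
    have h1 : (fun t => F (t, s)) = Set.indicator {t | c t ≤ s} k := by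
      funext t
      simp only [hF, Set.indicator_apply, Set.mem_setOf_eq]
    have hAmeas : MeasurableSet {t : ℝ | c t ≤ s} := measurableSet_le cmeas measurable_const
    rw [h1, integral_indicator hAmeas, hμ, Measure.restrict_restrict hAmeas]
    rw [Set.inter_comm]
    exact lowerset_integral_nonneg k hK _ fun u v huv hv => le_trans (hc huv) hv
  -- integrability of c * k on Ioc 0 X
  have hMbound : ∀ t ∈ Set.Ioc (0:ℝ) X, ‖c t * k t‖ ≤ (max ‖c 0‖ ‖c X‖) * ‖k t‖ := by
    intro t ht
    rw [norm_mul]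
    apply mul_le_mul_of_nonneg_right _ (norm_nonneg _)
    rw [Real.norm_eq_abs, abs_le]
    constructor
    · calc -(max ‖c 0‖ ‖c X‖) ≤ -‖c 0‖ := neg_le_neg (le_max_left _ _)
        _ ≤ c 0 := neg_abs_le _
        _ ≤ c t := hc ht.1.le
    · calc c t ≤ c X := hc ht.2
        _ ≤ ‖c X‖ := le_abs_self _
        _ ≤ max ‖c 0‖ ‖c X‖ := le_max_right _ _
  have hck : IntegrableOn (fun t => c t * k t) (Set.Ioc (0:ℝ) X) := by
    refine Integrable.mono' (hk.norm.const_mul (max ‖c 0‖ ‖c X‖))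
      (cmeas.mul hkm).aestronglyMeasurable ?_
    rw [ae_restrict_iff' measurableSet_Ioc]
    exact Filter.Eventually.of_forall hMbound
  have hsplit : ∫ t in Set.Ioc (0:ℝ) X, k t * (c X - c t)
      = c X * (∫ t in Set.Ioc (0:ℝ) X, k t) - ∫ t in Set.Ioc (0:ℝ) X, c t * k t := by
    rw [← MeasureTheory.integral_const_mul, ← integral_sub (hk.const_mul _) hck]
    refine setIntegral_congr_fun measurableSet_Ioc fun t _ => ?_
    ring
  rw [way1, hsplit] at way2
  linarith

lemma mono_mul_integrable (c k : ℝ → ℝ) {X : ℝ} (hc : Monotone c)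
    (hkm : Measurable k) (hk : IntegrableOn k (Set.Ioc (0:ℝ) X)) :
    IntegrableOn (fun t => c t * k t) (Set.Ioc (0:ℝ) X) := by
  refine Integrable.mono' (hk.norm.const_mul (max ‖c 0‖ ‖c X‖))
    ((hc.measurable.mul hkm).aestronglyMeasurable) ?_
  rw [ae_restrict_iff' measurableSet_Ioc]
  refine Filter.Eventually.of_forall fun t ht => ?_
  rw [norm_mul]
  apply mul_le_mul_of_nonneg_right _ (norm_nonneg _)
  rw [Real.norm_eq_abs, abs_le]
  constructor
  · calc -(max ‖c 0‖ ‖c X‖) ≤ -‖c 0‖ := neg_le_neg (le_max_left _ _)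
      _ ≤ c 0 := neg_abs_le _
      _ ≤ c t := hc ht.1.le
  · calc c t ≤ c X := hc ht.2
      _ ≤ ‖c X‖ := le_abs_self _
      _ ≤ max ‖c 0‖ ‖c X‖ := le_max_right _ _

/-- a nonneg antitone function with nonpositive integral on `(a,∞)` vanishes there -/
lemma vanish_of_integral_nonpos (g : ℝ → ℝ) (hg_nonneg : ∀ x, 0 ≤ g x)
    (hg_anti : AntitoneOn g (Set.Ici (0:ℝ))) {a : ℝ} (ha : 0 ≤ a)
    (hg_int : IntegrableOn g (Set.Ioi a))
    (h0 : ∫ t in Set.Ioi a, g t ≤ 0) : ∀ t, a < t → g t = 0 := by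
  intro t hat
  by_contra hgt
  have hgt' : 0 < g t := lt_of_le_of_ne (hg_nonneg t) (Ne.symm hgt)
  have h1 : g t * (t - a) ≤ ∫ s in Set.Ioc a t, g s := by
    have := setIntegral_mono_on (μ := volume) (s := Set.Ioc a t)
      (f := fun _ => g t) (g := g) (integrable_const _)
      (hg_int.mono_set Set.Ioc_subset_Ioi_self) measurableSet_Ioc
      (fun s hs => hg_anti (Set.mem_Ici.mpr (by linarith [hs.1])) (Set.mem_Ici.mpr (by linarith)) hs.2)
    rw [setIntegral_const, smul_eq_mul] at this
    calc g t * (t - a) = (volume (Set.Ioc a t)).toReal * g t := by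
          rw [Real.volume_Ioc, ENNReal.toReal_ofReal (by linarith)]; ring
      _ ≤ _ := this
  have h2 : ∫ s in Set.Ioc a t, g s ≤ ∫ s in Set.Ioi a, g s := by
    refine setIntegral_mono_set hg_int ?_ (HasSubset.Subset.eventuallyLE Set.Ioc_subset_Ioi_self)
    exact Filter.Eventually.of_forall fun s => hg_nonneg s
  nlinarith

/-- Concave-function characterization of majorization
(continuous Hardy–Littlewood–Pólya inequality): if `f, g` are non-increasing
nonnegative integrable functions on `[0,∞)` with `∫₀^x f ≤ ∫₀^x g` for every
`x ≥ 0` and equal (finite) total integrals, then for every concave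
`φ : [0,∞) → ℝ` with `φ(0) = 0` such that `φ∘f` and `φ∘g` are integrable on
`[0,∞)`, one has `∫₀^∞ φ(f(t)) dt ≥ ∫₀^∞ φ(g(t)) dt`. -/
theorem majorization_concave_characterization
    (f g : ℝ → ℝ)
    (hf_nonneg : ∀ x, 0 ≤ f x) (hg_nonneg : ∀ x, 0 ≤ g x)
    (hf_anti : AntitoneOn f (Set.Ici (0 : ℝ)))
    (hg_anti : AntitoneOn g (Set.Ici (0 : ℝ)))
    (hf_int : IntegrableOn f (Set.Ioi (0 : ℝ)))
    (hg_int : IntegrableOn g (Set.Ioi (0 : ℝ)))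
    (hmaj : ∀ x : ℝ, 0 ≤ x → ∫ t in (0 : ℝ)..x, f t ≤ ∫ t in (0 : ℝ)..x, g t)
    (htotal : ∫ t in Set.Ioi (0 : ℝ), f t = ∫ t in Set.Ioi (0 : ℝ), g t)
    (φ : ℝ → ℝ) (hφ : ConcaveOn ℝ (Set.Ici (0 : ℝ)) φ) (hφ0 : φ 0 = 0)
    (hφf_int : IntegrableOn (fun t => φ (f t)) (Set.Ioi (0 : ℝ)))
    (hφg_int : IntegrableOn (fun t => φ (g t)) (Set.Ioi (0 : ℝ))) :
    ∫ t in Set.Ioi (0 : ℝ), φ (g t) ≤ ∫ t in Set.Ioi (0 : ℝ), φ (f t) := by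
  classical
  -- set-integral form of the majorization hypothesis
  have hmajS : ∀ b : ℝ, 0 ≤ b →
      ∫ t in Set.Ioc (0:ℝ) b, f t ≤ ∫ t in Set.Ioc (0:ℝ) b, g t := by
    intro b hb
    have := hmaj b hb
    rwa [intervalIntegral.integral_of_le hb, intervalIntegral.integral_of_le hb] at this
  -- splitting of integrals over (0,∞)
  have hsplitIoi : ∀ (h : ℝ → ℝ), IntegrableOn h (Set.Ioi (0:ℝ)) → ∀ X : ℝ, 0 < X →
      ∫ t in Set.Ioi (0:ℝ), h t
        = (∫ t in Set.Ioc (0:ℝ) X, h t) + ∫ t in Set.Ioi X, h t := by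
    intro h hint X hX
    rw [← setIntegral_union (Set.Ioc_disjoint_Ioi le_rfl) measurableSet_Ioi
      (hint.mono_set Set.Ioc_subset_Ioi_self)
      (hint.mono_set (Set.Ioi_subset_Ioi hX.le)),
      Set.Ioc_union_Ioi_eq_Ioi hX.le]
  -- the global antitone (hence measurable) modification of g - f
  set k : ℝ → ℝ := fun t => g (max t 0) - f (max t 0) with hk
  have hkm : Measurable k := by
    have h1 : Antitone fun t : ℝ => g (max t 0) := fun u v huv =>
      hg_anti (Set.mem_Ici.mpr (le_max_right _ _)) (Set.mem_Ici.mpr (le_max_right _ _))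
        (max_le_max huv le_rfl)
    have h2 : Antitone fun t : ℝ => f (max t 0) := fun u v huv =>
      hf_anti (Set.mem_Ici.mpr (le_max_right _ _)) (Set.mem_Ici.mpr (le_max_right _ _))
        (max_le_max huv le_rfl)
    exact (h1.measurable).sub (h2.measurable)
  have hkeq : ∀ t : ℝ, 0 < t → k t = g t - f t := by
    intro t ht; simp [hk, max_eq_left ht.le]
  have hkint : ∀ X : ℝ, IntegrableOn k (Set.Ioc (0:ℝ) X) := by
    intro X
    refine IntegrableOn.congr_fun ?_ (fun t ht => (hkeq t ht.1).symm) measurableSet_Ioc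
    exact (hg_int.mono_set Set.Ioc_subset_Ioi_self).sub (hf_int.mono_set Set.Ioc_subset_Ioi_self)
  have hkK : ∀ b : ℝ, 0 ≤ b → 0 ≤ ∫ t in Set.Ioc (0:ℝ) b, k t := by
    intro b hb
    have heq : ∫ t in Set.Ioc (0:ℝ) b, k t
        = (∫ t in Set.Ioc (0:ℝ) b, g t) - ∫ t in Set.Ioc (0:ℝ) b, f t := by
      rw [← integral_sub (hg_int.mono_set Set.Ioc_subset_Ioi_self)
        (hf_int.mono_set Set.Ioc_subset_Ioi_self)]
      exact setIntegral_congr_fun measurableSet_Ioc fun t ht => hkeq t ht.1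
    rw [heq]
    linarith [hmajS b hb]
  -- main bound, for each 0 < X with f X > 0
  have key : ∀ X : ℝ, 0 < X → 0 < f X →
      (∫ t in Set.Ioc (0:ℝ) X, (φ (g t) - φ (f t)))
        ≤ max 0 (∫ t in Set.Ioi X, φ (f t)) := by
    intro X hX hfX
    have hXmem : X ∈ Set.Ici (0:ℝ) := Set.mem_Ici.mpr hX.le
    set c : ℝ → ℝ := fun t => sg φ (f (max (min t X) 0)) with hc
    have hclamp : ∀ t : ℝ, t ∈ Set.Ioc (0:ℝ) X → max (min t X) 0 = t := by
      intro t ht; rw [min_eq_left ht.2, max_eq_left ht.1.le]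
    have hclampX : ∀ t : ℝ, max (min t X) 0 ≤ X := fun t => max_le (min_le_right _ _) hX.le
    have hclamp0 : ∀ t : ℝ, (0:ℝ) ≤ max (min t X) 0 := fun t => le_max_right _ _
    have hfpos' : ∀ t : ℝ, 0 < f (max (min t X) 0) := by
      intro t
      exact lt_of_lt_of_le hfX (hf_anti (Set.mem_Ici.mpr (hclamp0 t)) hXmem (hclampX t))
    have hcm : Monotone c := by
      intro u v huv
      have huv' : max (min u X) 0 ≤ max (min v X) 0 :=
        max_le_max (min_le_min huv le_rfl) le_rfl
      have hfv : f (max (min v X) 0) ≤ f (max (min u X) 0) :=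
        hf_anti (Set.mem_Ici.mpr (hclamp0 u)) (Set.mem_Ici.mpr (hclamp0 v)) huv'
      rcases eq_or_lt_of_le hfv with h | h
      · exact le_of_eq (congrArg (sg φ) h.symm)
      · exact sg_anti hφ (hfpos' v) h
    have habel := abel_ineq c k hX hcm hkm (hkint X) (fun b hb => hkK b hb.1)
    have hcX : c X = sg φ (f X) := by
      simp only [hc]; rw [hclamp X ⟨hX, le_rfl⟩]
    have hpt : ∀ t ∈ Set.Ioc (0:ℝ) X, φ (g t) - φ (f t) ≤ c t * k t := by
      intro t ht
      have h1 : c t = sg φ (f t) := by simp only [hc]; rw [hclamp t ht]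
      have hft : 0 < f t :=
        lt_of_lt_of_le hfX (hf_anti (Set.mem_Ici.mpr ht.1.le) hXmem ht.2)
      rw [h1, hkeq t ht.1]
      exact sg_supergrad hφ hft (hg_nonneg t)
    have hleft : (∫ t in Set.Ioc (0:ℝ) X, (φ (g t) - φ (f t)))
        ≤ ∫ t in Set.Ioc (0:ℝ) X, c t * k t := by
      refine setIntegral_mono_on ?_ (mono_mul_integrable c k hcm hkm (hkint X))
        measurableSet_Ioc hpt
      exact (hφg_int.mono_set Set.Ioc_subset_Ioi_self).sub
        (hφf_int.mono_set Set.Ioc_subset_Ioi_self)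
    have hKdiff : ∫ t in Set.Ioc (0:ℝ) X, k t
        = (∫ t in Set.Ioc (0:ℝ) X, g t) - ∫ t in Set.Ioc (0:ℝ) X, f t := by
      rw [← integral_sub (hg_int.mono_set Set.Ioc_subset_Ioi_self)
        (hf_int.mono_set Set.Ioc_subset_Ioi_self)]
      exact setIntegral_congr_fun measurableSet_Ioc fun t ht => hkeq t ht.1
    have hKX : ∫ t in Set.Ioc (0:ℝ) X, k t
        = (∫ t in Set.Ioi X, f t) - ∫ t in Set.Ioi X, g t := by
      have h1 := hsplitIoi f hf_int X hX
      have h2 := hsplitIoi g hg_int X hX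
      rw [hKdiff]; linarith [htotal]
    have hK0 : 0 ≤ ∫ t in Set.Ioc (0:ℝ) X, k t := hkK X hX.le
    rcases le_or_gt (c X) 0 with hcneg | hcpos
    · calc (∫ t in Set.Ioc (0:ℝ) X, (φ (g t) - φ (f t)))
          ≤ c X * ∫ t in Set.Ioc (0:ℝ) X, k t := hleft.trans habel
        _ ≤ 0 := mul_nonpos_of_nonpos_of_nonneg hcneg hK0
        _ ≤ max 0 (∫ t in Set.Ioi X, φ (f t)) := le_max_left _ _
    · have hKle : (∫ t in Set.Ioc (0:ℝ) X, k t) ≤ ∫ t in Set.Ioi X, f t := by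
        have h0g : 0 ≤ ∫ t in Set.Ioi X, g t :=
          setIntegral_nonneg measurableSet_Ioi fun t _ => hg_nonneg t
        rw [hKX]; linarith
      have h6 : (∫ t in Set.Ioi X, c X * f t) ≤ ∫ t in Set.Ioi X, φ (f t) := by
        refine setIntegral_mono_on
          ((hf_int.mono_set (Set.Ioi_subset_Ioi hX.le)).const_mul _)
          (hφf_int.mono_set (Set.Ioi_subset_Ioi hX.le)) measurableSet_Ioi ?_
        intro t ht
        have htmem : t ∈ Set.Ici (0:ℝ) := Set.mem_Ici.mpr (hX.le.trans (le_of_lt ht))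
        have hftX : f t ≤ f X := hf_anti hXmem htmem (le_of_lt ht)
        have hft0 : 0 ≤ f t := hf_nonneg t
        set a := f t / f X with haa
        have ha0 : 0 ≤ a := div_nonneg hft0 hfX.le
        have ha1 : a ≤ 1 := div_le_one_of_le₀ hftX hfX.le
        have haf : a * f X = f t := by rw [haa, div_mul_cancel₀ _ hfX.ne']
        have hcomb := hφ.2 (Set.mem_Ici.mpr hfX.le) (Set.mem_Ici.mpr (le_refl (0:ℝ)))
          ha0 (by linarith : (0:ℝ) ≤ 1 - a) (by ring)
        simp only [smul_eq_mul, hφ0, mul_zero, add_zero] at hcomb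
        rw [haf] at hcomb
        have hsg := sg_mul_le hφ hfX hφ0
        rw [hcX]
        nlinarith [hsg, ha0, hcomb, haf]
      calc (∫ t in Set.Ioc (0:ℝ) X, (φ (g t) - φ (f t)))
          ≤ c X * ∫ t in Set.Ioc (0:ℝ) X, k t := hleft.trans habel
        _ ≤ c X * ∫ t in Set.Ioi X, f t := mul_le_mul_of_nonneg_left hKle hcpos.le
        _ = ∫ t in Set.Ioi X, c X * f t := (MeasureTheory.integral_const_mul _ _).symm
        _ ≤ ∫ t in Set.Ioi X, φ (f t) := h6
        _ ≤ max 0 (∫ t in Set.Ioi X, φ (f t)) := le_max_right _ _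

  -- reduce to showing the difference integral is nonpositive
  suffices main : (∫ t in Set.Ioi (0:ℝ), (φ (g t) - φ (f t))) ≤ 0 by
    rw [integral_sub hφg_int hφf_int] at main
    linarith
  have hDint : IntegrableOn (fun t => φ (g t) - φ (f t)) (Set.Ioi (0:ℝ)) :=
    hφg_int.sub hφf_int
  by_cases hz : ∀ t : ℝ, 0 < t → f t = 0
  · -- trivial case: both functions vanish a.e. on `(0,∞)`
    have hTf : ∫ t in Set.Ioi (0:ℝ), f t = 0 := by
      rw [setIntegral_congr_fun measurableSet_Ioi
        (fun t ht => hz t ht : Set.EqOn f (fun _ => (0:ℝ)) (Set.Ioi 0))]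
      simp
    have hTg : ∫ t in Set.Ioi (0:ℝ), g t ≤ 0 := by rw [← htotal, hTf]
    have hgz : ∀ t, 0 < t → g t = 0 :=
      vanish_of_integral_nonpos g hg_nonneg hg_anti le_rfl hg_int hTg
    have e1 : (∫ t in Set.Ioi (0:ℝ), (φ (g t) - φ (f t))) = 0 := by
      rw [setIntegral_congr_fun measurableSet_Ioi
        (fun t ht => by show φ (g t) - φ (f t) = 0; rw [hz t ht, hgz t ht, sub_self]
          : Set.EqOn (fun t => φ (g t) - φ (f t)) (fun _ => (0:ℝ)) (Set.Ioi 0))]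
      simp
    exact le_of_eq e1
  · push_neg at hz
    obtain ⟨t1, ht1, hft1ne⟩ := hz
    have hft1 : 0 < f t1 := lt_of_le_of_ne (hf_nonneg t1) (Ne.symm hft1ne)
    by_cases hS : ∃ s : ℝ, 0 < s ∧ f s = 0
    · -- `f` hits zero at some finite point
      set S := {s : ℝ | 0 < s ∧ f s = 0} with hSdef
      have hSne : S.Nonempty := hS
      have hSbd : BddBelow S := ⟨0, fun s hs => hs.1.le⟩
      set x0 := sInf S with hx0
      have ht1x0 : t1 ≤ x0 := by
        refine le_csInf hSne fun s hs => ?_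
        by_contra hcc; push_neg at hcc
        have h1 : f t1 ≤ f s :=
          hf_anti (Set.mem_Ici.mpr hs.1.le) (Set.mem_Ici.mpr ht1.le) hcc.le
        exact hft1ne (le_antisymm (h1.trans (le_of_eq hs.2)) (hf_nonneg t1))
      have hx0pos : 0 < x0 := lt_of_lt_of_le ht1 ht1x0
      have hfzero : ∀ t, x0 < t → f t = 0 := by
        intro t ht
        obtain ⟨s, hsS, hst⟩ := exists_lt_of_csInf_lt hSne ht
        have h1 : f t ≤ f s := hf_anti (Set.mem_Ici.mpr hsS.1.le)
          (Set.mem_Ici.mpr (hsS.1.le.trans hst.le)) hst.le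
        exact le_antisymm (h1.trans (le_of_eq hsS.2)) (hf_nonneg t)
      have hfpos : ∀ t, 0 < t → t < x0 → 0 < f t := by
        intro t ht htx
        rcases (hf_nonneg t).lt_or_eq with h | h
        · exact h
        · exact absurd (csInf_le hSbd ⟨ht, h.symm⟩) (not_le.mpr htx)
      have hfIoi : ∫ t in Set.Ioi x0, f t = 0 := by
        rw [setIntegral_congr_fun measurableSet_Ioi
          (fun t ht => hfzero t ht : Set.EqOn f (fun _ => (0:ℝ)) (Set.Ioi x0))]
        simp
      have hgIoi : ∫ t in Set.Ioi x0, g t ≤ 0 := by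
        have h1 := hsplitIoi f hf_int x0 hx0pos
        have h2 := hsplitIoi g hg_int x0 hx0pos
        have h3 := hmajS x0 hx0pos.le
        linarith [htotal]
      have hgzero : ∀ t, x0 < t → g t = 0 :=
        vanish_of_integral_nonpos g hg_nonneg hg_anti hx0pos.le
          (hg_int.mono_set (Set.Ioi_subset_Ioi hx0pos.le)) hgIoi
      -- the approximating sequence
      set Xn : ℕ → ℝ := fun n => x0 - (x0 - t1)/(n+1) with hXn
      have hx0t1 : (0:ℝ) ≤ x0 - t1 := by linarith
      have hXnmono : Monotone Xn := by
        intro m n hmn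
        simp only [hXn]
        have h1 : (x0 - t1)/((n:ℝ)+1) ≤ (x0 - t1)/((m:ℝ)+1) := by
          first
          | (gcongr; exact_mod_cast hmn)
          | gcongr
        linarith
      have hXnt1 : ∀ n, t1 ≤ Xn n := by
        intro n
        simp only [hXn]
        have h1 : (x0 - t1)/((n:ℝ)+1) ≤ (x0 - t1) := by
          apply div_le_self hx0t1
          have : (0:ℝ) ≤ (n:ℝ) := Nat.cast_nonneg n
          linarith
        linarith
      have hXnle : ∀ n, Xn n ≤ x0 := by
        intro n
        simp only [hXn]
        have h1 : (0:ℝ) ≤ (x0 - t1)/((n:ℝ)+1) := by positivity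
        linarith
      have hXnpos : ∀ n, 0 < Xn n := fun n => lt_of_lt_of_le ht1 (hXnt1 n)
      have hfXn : ∀ n, 0 < f (Xn n) := by
        intro n
        rcases lt_or_eq_of_le (hXnle n) with h | h
        · exact hfpos _ (hXnpos n) h
        · have hnum : x0 - t1 = 0 := by
            have h2 : (x0 - t1)/((n:ℝ)+1) = 0 := by
              simp only [hXn] at h; linarith
            rcases div_eq_zero_iff.mp h2 with h3 | h3
            · exact h3
            · exact absurd h3 (by positivity)
          have hXt : Xn n = t1 := by
            simp only [hXn, hnum, zero_div, sub_zero]; linarith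
          rw [hXt]; exact hft1
      have hXntend : Filter.Tendsto Xn Filter.atTop (nhds x0) := by
        have h1 : Filter.Tendsto (fun n : ℕ => ((n:ℝ)+1)) Filter.atTop Filter.atTop :=
          Filter.tendsto_atTop_add_const_right _ _ tendsto_natCast_atTop_atTop
        have h2 : Filter.Tendsto (fun n : ℕ => (x0 - t1)/((n:ℝ)+1)) Filter.atTop (nhds 0) :=
          Filter.Tendsto.div_atTop tendsto_const_nhds h1
        have h3 := Filter.Tendsto.sub (tendsto_const_nhds (x := x0)) h2
        simpa using h3
      set U := ⋃ n, Set.Ioc (0:ℝ) (Xn n) with hU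
      have hUmeas : MeasurableSet U := MeasurableSet.iUnion fun n => measurableSet_Ioc
      have hUsub : U ⊆ Set.Ioi (0:ℝ) :=
        Set.iUnion_subset fun n => Set.Ioc_subset_Ioi_self
      have hUsup : Set.Ioo 0 x0 ⊆ U := by
        intro y hy
        obtain ⟨n, hn⟩ := (hXntend.eventually (eventually_ge_nhds hy.2)).exists
        exact Set.mem_iUnion.mpr ⟨n, ⟨hy.1, hn⟩⟩
      have hUae : ∀ h : ℝ → ℝ, IntegrableOn h (Set.Ioi (0:ℝ)) →
          (∀ t, x0 < t → h t = 0) →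
          (∫ t in U, h t) = ∫ t in Set.Ioi (0:ℝ), h t := by
        intro h hint hvan
        have hsub : (Set.Ioi (0:ℝ)) \ U ⊆ Set.Ici x0 := by
          intro t ht
          by_contra hlt
          rw [Set.mem_Ici, not_le] at hlt
          exact ht.2 (hUsup ⟨ht.1, hlt⟩)
        have hdiff : ∫ t in (Set.Ioi (0:ℝ)) \ U, h t = 0 := by
          refine integral_eq_zero_of_ae ?_
          have h1 : ∀ᵐ t ∂(volume.restrict (Set.Ici x0)), h t = 0 := by
            rw [ae_restrict_iff' measurableSet_Ici]
            refine (ae_iff).mpr (measure_mono_null ?_ (measure_singleton x0))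
            intro t ht'
            simp only [Set.mem_setOf_eq, Classical.not_imp] at ht'
            simp only [Set.mem_singleton_iff]
            rcases lt_or_eq_of_le (Set.mem_Ici.mp ht'.1) with hlt | heq
            · exact absurd (hvan t hlt) ht'.2
            · exact heq.symm
          exact ae_restrict_of_ae_restrict_of_subset hsub h1
        rw [integral_diff hUmeas hint hUsub] at hdiff
        linarith
      have htend1 : Filter.Tendsto (fun n => ∫ t in Set.Ioc (0:ℝ) (Xn n),
          (φ (g t) - φ (f t))) Filter.atTop
          (nhds (∫ t in Set.Ioi (0:ℝ), (φ (g t) - φ (f t)))) := by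
        have := tendsto_setIntegral_of_monotone (fun n => measurableSet_Ioc)
          (fun m n hmn => Set.Ioc_subset_Ioc_right (hXnmono hmn))
          (μ := volume) (f := fun t => φ (g t) - φ (f t)) (hDint.mono_set hUsub)
        rw [← hU, hUae _ hDint
          (fun t ht => by rw [hfzero t ht, hgzero t ht, sub_self])] at this
        exact this
      have htend2 : Filter.Tendsto (fun n => ∫ t in Set.Ioc (0:ℝ) (Xn n), φ (f t))
          Filter.atTop (nhds (∫ t in Set.Ioi (0:ℝ), φ (f t))) := by
        have := tendsto_setIntegral_of_monotone (fun n => measurableSet_Ioc)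
          (fun m n hmn => Set.Ioc_subset_Ioc_right (hXnmono hmn))
          (μ := volume) (f := fun t => φ (f t)) (hφf_int.mono_set hUsub)
        rw [← hU, hUae _ hφf_int (fun t ht => by rw [hfzero t ht, hφ0])] at this
        exact this
      have htend3 : Filter.Tendsto
          (fun n => max 0 ((∫ t in Set.Ioi (0:ℝ), φ (f t))
            - ∫ t in Set.Ioc (0:ℝ) (Xn n), φ (f t))) Filter.atTop (nhds 0) := by
        have h1 := Filter.Tendsto.max (tendsto_const_nhds (x := (0:ℝ)))
          ((tendsto_const_nhds (x := ∫ t in Set.Ioi (0:ℝ), φ (f t))).sub htend2)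
        simpa using h1
      refine le_of_tendsto_of_tendsto' htend1 htend3 fun n => ?_
      have hkey := key (Xn n) (hXnpos n) (hfXn n)
      have hsp := hsplitIoi (fun t => φ (f t)) hφf_int (Xn n) (hXnpos n)
      have : max 0 (∫ t in Set.Ioi (Xn n), φ (f t))
          = max 0 ((∫ t in Set.Ioi (0:ℝ), φ (f t))
            - ∫ t in Set.Ioc (0:ℝ) (Xn n), φ (f t)) := by
        congr 1; linarith
      rw [← this]
      exact hkey
    · -- `f` is positive everywhere on `(0,∞)`
      push_neg at hS
      have hfpos : ∀ t, 0 < t → 0 < f t := fun t ht =>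
        lt_of_le_of_ne (hf_nonneg t) (Ne.symm (hS t ht))
      set Xn : ℕ → ℝ := fun n => (n:ℝ) + t1 with hXn
      have hXnpos : ∀ n, 0 < Xn n := by
        intro n; simp only [hXn]
        have : (0:ℝ) ≤ (n:ℝ) := Nat.cast_nonneg n
        linarith
      have hXnmono : Monotone Xn := by
        intro m n hmn; simp only [hXn]
        have : (m:ℝ) ≤ (n:ℝ) := by exact_mod_cast hmn
        linarith
      have hunion : (⋃ n, Set.Ioc (0:ℝ) (Xn n)) = Set.Ioi (0:ℝ) := by
        ext y
        simp only [Set.mem_iUnion, Set.mem_Ioc, Set.mem_Ioi]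
        constructor
        · rintro ⟨n, hn, _⟩; exact hn
        · intro hy
          obtain ⟨n, hn⟩ := exists_nat_ge y
          exact ⟨n, hy, by simp only [hXn]; linarith⟩
      have htend1 : Filter.Tendsto (fun n => ∫ t in Set.Ioc (0:ℝ) (Xn n),
          (φ (g t) - φ (f t))) Filter.atTop
          (nhds (∫ t in Set.Ioi (0:ℝ), (φ (g t) - φ (f t)))) := by
        have := tendsto_setIntegral_of_monotone (fun n => measurableSet_Ioc)
          (fun m n hmn => Set.Ioc_subset_Ioc_right (hXnmono hmn))
          (μ := volume) (f := fun t => φ (g t) - φ (f t)) (hunion ▸ hDint)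
        rwa [hunion] at this
      have htend2 : Filter.Tendsto (fun n => ∫ t in Set.Ioc (0:ℝ) (Xn n), φ (f t))
          Filter.atTop (nhds (∫ t in Set.Ioi (0:ℝ), φ (f t))) := by
        have := tendsto_setIntegral_of_monotone (fun n => measurableSet_Ioc)
          (fun m n hmn => Set.Ioc_subset_Ioc_right (hXnmono hmn))
          (μ := volume) (f := fun t => φ (f t)) (hunion ▸ hφf_int)
        rwa [hunion] at this
      have htend3 : Filter.Tendsto
          (fun n => max 0 ((∫ t in Set.Ioi (0:ℝ), φ (f t))
            - ∫ t in Set.Ioc (0:ℝ) (Xn n), φ (f t))) Filter.atTop (nhds 0) := by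
        have h1 := Filter.Tendsto.max (tendsto_const_nhds (x := (0:ℝ)))
          ((tendsto_const_nhds (x := ∫ t in Set.Ioi (0:ℝ), φ (f t))).sub htend2)
        simpa using h1
      refine le_of_tendsto_of_tendsto' htend1 htend3 fun n => ?_
      have hkey := key (Xn n) (hXnpos n) (hfpos _ (hXnpos n))
      have hsp := hsplitIoi (fun t => φ (f t)) hφf_int (Xn n) (hXnpos n)
      have : max 0 (∫ t in Set.Ioi (Xn n), φ (f t))
          = max 0 ((∫ t in Set.Ioi (0:ℝ), φ (f t))
            - ∫ t in Set.Ioc (0:ℝ) (Xn n), φ (f t)) := by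
        congr 1; linarith
      rw [← this]
      exact hkey
end

section
/- For every real M ≥ 1, Σ_{k=1}^∞ 2^k · log₂( 4·M·4^(−k) + 1 ) ≤ 24·√M·log₂(√M + 1) + 10·√M. -/
/-- For every real `M ≥ 1`,
`∑_{k=1}^∞ 2^k·log₂(4M·4^{-k} + 1) ≤ 24·√M·log₂(√M + 1) + 10·√M`. -/
theorem occupancy_series_bound (M : ℝ) (hM : 1 ≤ M) :
    ∑' k : ℕ, (2 : ℝ) ^ (k + 1) * Real.logb 2 (4 * M / 4 ^ (k + 1) + 1)
      ≤ 24 * Real.sqrt M * Real.logb 2 (Real.sqrt M + 1) + 10 * Real.sqrt M := by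
  have hM0 : (0:ℝ) < M := by linarith
  set s := Real.sqrt M with hsdef
  have hs1 : 1 ≤ s := Real.one_le_sqrt.mpr hM
  have hs0 : 0 < s := by linarith
  have hs2 : s * s = M := Real.mul_self_sqrt (le_of_lt hM0)
  have hlog2 : 0 < Real.log 2 := Real.log_pos one_lt_two
  set f : ℕ → ℝ := fun k => (2:ℝ)^(k+1) * Real.logb 2 (4*M/4^(k+1)+1) with hfdef
  have hxpos : ∀ k : ℕ, (0:ℝ) < 4*M/4^(k+1) := fun k => by positivity
  have hf0 : ∀ k, 0 ≤ f k := by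
    intro k
    apply mul_nonneg (by positivity)
    apply Real.logb_nonneg one_lt_two
    nlinarith [hxpos k]
  -- termwise bound f k ≤ (2M/log 2)·(1/2)^k
  have key : ∀ k : ℕ, f k ≤ (2*M/Real.log 2) * (1/2:ℝ)^k := by
    intro k
    have hx := hxpos k
    have hlog : Real.log (4*M/4^(k+1) + 1) ≤ 4*M/4^(k+1) := by
      have := Real.log_le_sub_one_of_pos (by linarith : (0:ℝ) < 4*M/4^(k+1)+1)
      linarith
    have h4 : (4:ℝ)^(k+1) = 2^(k+1) * 2^(k+1) := by rw [← mul_pow]; norm_num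
    have hrw : (2:ℝ)^(k+1) * (4*M/4^(k+1)) = (2*M) * (1/2)^k := by
      rw [h4, div_pow, one_pow, pow_succ]
      field_simp
      ring
    calc f k = (2:ℝ)^(k+1) * (Real.log (4*M/4^(k+1)+1) / Real.log 2) := by
            rw [hfdef]; simp [Real.logb]
      _ ≤ (2:ℝ)^(k+1) * ((4*M/4^(k+1)) / Real.log 2) := by
            gcongr
      _ = (2*M/Real.log 2) * (1/2:ℝ)^k := by
            rw [mul_div_assoc', hrw]; ring
  have hsumg : Summable (fun k : ℕ => (2*M/Real.log 2) * (1/2:ℝ)^k) :=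
    (summable_geometric_of_lt_one (by norm_num) (by norm_num)).mul_left _
  have hsum : Summable f := Summable.of_nonneg_of_le hf0 key hsumg
  -- choose K with s ≤ 2^K ≤ 2s
  obtain ⟨K, hKge, hKle⟩ : ∃ K : ℕ, s ≤ (2:ℝ)^K ∧ (2:ℝ)^K ≤ 2*s := by
    have hlb0 : 0 ≤ Real.logb 2 s := Real.logb_nonneg one_lt_two hs1
    refine ⟨⌊Real.logb 2 s⌋₊ + 1, ?_, ?_⟩
    · have h1 : Real.logb 2 s ≤ ((⌊Real.logb 2 s⌋₊ + 1 : ℕ):ℝ) := by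
        have := Nat.lt_floor_add_one (Real.logb 2 s)
        push_cast
        linarith
      calc s = (2:ℝ) ^ (Real.logb 2 s) := (Real.rpow_logb two_pos (by norm_num) hs0).symm
        _ ≤ (2:ℝ) ^ (((⌊Real.logb 2 s⌋₊ + 1 : ℕ)):ℝ) :=
            Real.rpow_le_rpow_of_exponent_le one_le_two h1
        _ = (2:ℝ)^(⌊Real.logb 2 s⌋₊ + 1) := by rw [Real.rpow_natCast]
    · have h1 : ((⌊Real.logb 2 s⌋₊ : ℝ)) ≤ Real.logb 2 s := Nat.floor_le hlb0
      have h2 : (2:ℝ)^(⌊Real.logb 2 s⌋₊) ≤ s := by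
        calc (2:ℝ)^(⌊Real.logb 2 s⌋₊) = (2:ℝ) ^ ((⌊Real.logb 2 s⌋₊ : ℝ)) := by
              rw [Real.rpow_natCast]
          _ ≤ (2:ℝ) ^ (Real.logb 2 s) := Real.rpow_le_rpow_of_exponent_le one_le_two h1
          _ = s := Real.rpow_logb two_pos (by norm_num) hs0
      rw [pow_succ]
      nlinarith
  -- split the sum
  rw [← Summable.sum_add_tsum_nat_add K hsum]
  -- head bound
  set L : ℝ := Real.logb 2 (s + 1) with hLdef
  have hL1 : 1 ≤ L := by
    rw [hLdef]
    calc (1:ℝ) = Real.logb 2 2 := (Real.logb_self_eq_one one_lt_two).symm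
      _ ≤ Real.logb 2 (s+1) := by
          apply Real.logb_le_logb_of_le one_lt_two (by norm_num) (by linarith)
  set A : ℝ := Real.logb 2 (4*M+1) with hAdef
  have hA0 : 0 ≤ A := Real.logb_nonneg one_lt_two (by nlinarith)
  have hAle : A ≤ 2 + 2*L := by
    have h1 : A ≤ Real.logb 2 (4*(s+1)^2) := by
      apply Real.logb_le_logb_of_le one_lt_two (by positivity)
      nlinarith
    have h2 : Real.logb 2 (4*(s+1)^2) = 2 + 2*L := by
      rw [show (4:ℝ) = 2^2 by norm_num,
        Real.logb_mul (by positivity) (by positivity), Real.logb_pow, Real.logb_pow,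
        Real.logb_self_eq_one one_lt_two]
      push_cast
      ring
    linarith
  have hhead : ∑ i ∈ Finset.range K, f i ≤ A * (2 * (2:ℝ)^K) := by
    have h1 : ∀ i ∈ Finset.range K, f i ≤ (2:ℝ)^(i+1) * A := by
      intro i _
      rw [hfdef]
      apply mul_le_mul_of_nonneg_left _ (by positivity)
      apply Real.logb_le_logb_of_le one_lt_two (by positivity)
      have : (4:ℝ)*M/4^(i+1) ≤ 4*M := by
        apply div_le_self (by positivity) (one_le_pow₀ (by norm_num))
      linarith
    calc ∑ i ∈ Finset.range K, f i ≤ ∑ i ∈ Finset.range K, (2:ℝ)^(i+1) * A :=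
          Finset.sum_le_sum h1
      _ = (∑ i ∈ Finset.range K, (2:ℝ)^i) * (2 * A) := by
          rw [Finset.sum_mul]
          apply Finset.sum_congr rfl
          intro i _
          rw [pow_succ]; ring
      _ = ((2:ℝ)^K - 1) * (2*A) := by
          rw [geom_sum_eq (by norm_num)]
          norm_num
      _ ≤ A * (2 * (2:ℝ)^K) := by nlinarith [pow_pos (two_pos (α := ℝ)) K]
  -- tail bound
  have htail : ∑' i : ℕ, f (i + K) ≤ 4*M/(Real.log 2 * (2:ℝ)^K) := by
    have hform : ∀ i : ℕ, (2*M/Real.log 2) * (1/2:ℝ)^(i+K)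
        = ((2*M/Real.log 2) * (1/2:ℝ)^K) * (1/2:ℝ)^i := by
      intro i; rw [pow_add]; ring
    have hsumg' : Summable (fun i : ℕ => (2*M/Real.log 2) * (1/2:ℝ)^(i+K)) := by
      simp_rw [hform]
      exact (summable_geometric_of_lt_one (by norm_num) (by norm_num)).mul_left _
    have h1 : ∑' i : ℕ, f (i + K) ≤ ∑' i : ℕ, (2*M/Real.log 2) * (1/2:ℝ)^(i+K) :=
      Summable.tsum_le_tsum (fun i => key (i + K)) ((summable_nat_add_iff K).mpr hsum) hsumg'
    have h2 : ∑' i : ℕ, (2*M/Real.log 2) * (1/2:ℝ)^(i+K)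
        = (2*M/Real.log 2) * (1/2:ℝ)^K * 2 := by
      have : ∀ i : ℕ, (2*M/Real.log 2) * (1/2:ℝ)^(i+K)
          = ((2*M/Real.log 2) * (1/2:ℝ)^K) * (1/2:ℝ)^i := by
        intro i; rw [pow_add]; ring
      rw [tsum_congr this, tsum_mul_left, tsum_geometric_of_lt_one (by norm_num) (by norm_num)]
      norm_num
    have h3 : (2*M/Real.log 2) * (1/2:ℝ)^K * 2 = 4*M/(Real.log 2 * (2:ℝ)^K) := by
      rw [div_pow, one_pow]
      field_simp
      ring
    rw [h2, h3] at h1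
    exact h1
  -- combine
  have htail2 : 4*M/(Real.log 2 * (2:ℝ)^K) ≤ 6*s := by
    rw [div_le_iff₀ (by positivity)]
    have hlog23 : (2:ℝ)/3 ≤ Real.log 2 := by
      have := Real.log_two_gt_d9
      linarith
    have h2K : (0:ℝ) < (2:ℝ)^K := by positivity
    nlinarith [mul_le_mul_of_nonneg_left hKge hs0.le,
      mul_le_mul_of_nonneg_right hlog23 (mul_nonneg hs0.le h2K.le)]
  have h2K : (0:ℝ) < (2:ℝ)^K := by positivity
  nlinarith [hhead, htail, htail2, hAle, hA0, hKle, hL1, hs1]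
end

section
/- Let n ≥ 1 be an integer and c > 1, λ > 1 be reals. Let X_1, …, X_n be i.i.d. random variables taking values in the positive integers with P(X_1 > x) ≤ c·x^(−λ) for every integer x ≥ 1. Then E[ 2n · log₂( 2·max(X_1,…,X_n)/n + 1 ) ] ≤ 26·c·n^(1/λ)/min(λ − 1, 1). -/
open MeasureTheory ProbabilityTheory
open scoped ENNReal

lemma aux_lintegral_nat {Ω : Type*} [MeasurableSpace Ω] (μ : Measure Ω) {g : Ω → ℕ}
    (hg : Measurable g) :
    ∫⁻ ω, (g ω : ℝ≥0∞) ∂μ = ∑' k : ℕ, μ {ω | k < g ω} := by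
  have key : ∀ ω, (g ω : ℝ≥0∞)
      = ∑' k : ℕ, Set.indicator {ω' | k < g ω'} (fun _ => (1 : ℝ≥0∞)) ω := by
    intro ω
    rw [tsum_eq_sum (s := Finset.range (g ω)) (by
      intro k hk
      simp only [Finset.mem_range, not_lt] at hk
      exact Set.indicator_of_notMem (by simpa using hk.not_gt) _)]
    rw [Finset.sum_congr rfl (fun k hk => Set.indicator_of_mem
      (by simpa using Finset.mem_range.mp hk) _)]
    simp
  calc ∫⁻ ω, (g ω : ℝ≥0∞) ∂μ
      = ∫⁻ ω, ∑' k : ℕ, Set.indicator {ω' | k < g ω'} (fun _ => (1 : ℝ≥0∞)) ω ∂μ :=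
        lintegral_congr key
    _ = ∑' k : ℕ, ∫⁻ ω, Set.indicator {ω' | k < g ω'} (fun _ => (1 : ℝ≥0∞)) ω ∂μ :=
        lintegral_tsum (fun k => ((measurable_const.indicator
          (hg measurableSet_Ioi)).aemeasurable))
    _ = ∑' k : ℕ, μ {ω | k < g ω} := by
        refine tsum_congr fun k => ?_
        exact lintegral_indicator_one (hg measurableSet_Ioi)

lemma aux_mvt {lam : ℝ} (hlam : 1 < lam) {a : ℝ} (ha : 1 ≤ a) :
    (lam - 1) * (a + 1) ^ (-lam) ≤ a ^ (1 - lam) - (a + 1) ^ (1 - lam) := by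
  have ha0 : (0:ℝ) < a := by linarith
  obtain ⟨x, hx, hderiv⟩ := exists_deriv_eq_slope (fun t : ℝ => t ^ (1 - lam))
    (by linarith : a < a + 1)
    (by
      apply ContinuousOn.rpow_const continuousOn_id
      intro t ht
      exact Or.inl (ne_of_gt (lt_of_lt_of_le ha0 ht.1)))
    (by
      intro t ht
      exact (Real.hasDerivAt_rpow_const (p := 1 - lam)
        (Or.inl (by rcases ht with ⟨h1, _⟩; nlinarith))).differentiableAt.differentiableWithinAt)
  have hx0 : 0 < x := lt_trans ha0 hx.1
  have hd : deriv (fun t : ℝ => t ^ (1 - lam)) x = (1 - lam) * x ^ (-lam) := by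
    have := (Real.hasDerivAt_rpow_const (p := 1 - lam) (Or.inl hx0.ne')).deriv
    rw [this]; ring_nf
  rw [hd] at hderiv
  have hmono : (a + 1) ^ (-lam) ≤ x ^ (-lam) :=
    Real.rpow_le_rpow_of_nonpos hx0 hx.2.le (by linarith)
  have h1 : (1 - lam) * x ^ (-lam) = ((a + 1) ^ (1 - lam) - a ^ (1 - lam)) / (a + 1 - a) :=
    hderiv
  rw [show a + 1 - a = (1:ℝ) by ring, div_one] at h1
  nlinarith [mul_le_mul_of_nonneg_left hmono (by linarith : (0:ℝ) ≤ lam - 1)]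

lemma aux_tail_sum {lam : ℝ} (hlam : 1 < lam) {k : ℕ} (hk : 1 ≤ k) :
    ∑' j : ℕ, ((j + k : ℕ) : ℝ) ^ (-lam)
      ≤ (k : ℝ) ^ (-lam) + (k : ℝ) ^ (1 - lam) / (lam - 1) := by
  have hsum : Summable (fun j : ℕ => ((j + k : ℕ) : ℝ) ^ (-lam)) :=
    (summable_nat_add_iff k).2 (Real.summable_nat_rpow.2 (by linarith))
  rw [Summable.tsum_eq_zero_add hsum]
  have h0 : ((0 + k : ℕ) : ℝ) ^ (-lam) = (k : ℝ) ^ (-lam) := by norm_num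
  rw [h0]
  refine add_le_add_right ?_ _
  have key : ∀ j : ℕ, ((j + 1 + k : ℕ) : ℝ) ^ (-lam) ≤
      ((j + k : ℕ) : ℝ) ^ (1 - lam) / (lam - 1)
        - ((j + 1 + k : ℕ) : ℝ) ^ (1 - lam) / (lam - 1) := by
    intro j
    have ha : (1 : ℝ) ≤ ((j + k : ℕ) : ℝ) := by
      have : 1 ≤ j + k := le_trans hk (Nat.le_add_left k j)
      exact_mod_cast this
    have h := aux_mvt hlam ha
    have hcast : ((j + 1 + k : ℕ) : ℝ) = ((j + k : ℕ) : ℝ) + 1 := by push_cast; ring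
    rw [hcast, ← sub_div, le_div_iff₀ (by linarith : (0:ℝ) < lam - 1)]
    nlinarith
  refine Real.tsum_le_of_sum_range_le
    (fun j => Real.rpow_nonneg (by positivity) _) (fun N => ?_)
  calc ∑ j ∈ Finset.range N, ((j + 1 + k : ℕ) : ℝ) ^ (-lam)
      ≤ ∑ j ∈ Finset.range N, (((j + k : ℕ) : ℝ) ^ (1 - lam) / (lam - 1)
          - ((j + 1 + k : ℕ) : ℝ) ^ (1 - lam) / (lam - 1)) :=
        Finset.sum_le_sum (fun j _ => key j)
    _ = ((0 + k : ℕ) : ℝ) ^ (1 - lam) / (lam - 1)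
          - ((N + k : ℕ) : ℝ) ^ (1 - lam) / (lam - 1) :=
        Finset.sum_range_sub' (fun j => ((j + k : ℕ) : ℝ) ^ (1 - lam) / (lam - 1)) N
    _ ≤ (k : ℝ) ^ (1 - lam) / (lam - 1) := by
        have hN : (0:ℝ) ≤ ((N + k : ℕ) : ℝ) ^ (1 - lam) / (lam - 1) :=
          div_nonneg (Real.rpow_nonneg (by positivity) _) (by linarith)
        simp only [Nat.zero_add]
        linarith

lemma aux_trunc {Ω : Type*} [MeasurableSpace Ω] (μ : Measure Ω) [IsProbabilityMeasure μ]
    (Y : Ω → ℕ) (hY : Measurable Y) (c lam : ℝ) (hc : 0 ≤ c) (hlam : 1 < lam)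
    (htail : ∀ x : ℕ, 1 ≤ x → (μ {ω | x < Y ω}).toReal ≤ c * (x : ℝ) ^ (-lam))
    (k : ℕ) (hk : 1 ≤ k) :
    ∫⁻ ω, ((Y ω - k : ℕ) : ℝ≥0∞) ∂μ
      ≤ ENNReal.ofReal (c * ((k : ℝ) ^ (-lam) + (k : ℝ) ^ (1 - lam) / (lam - 1))) := by
  have hsum : Summable (fun j : ℕ => ((j + k : ℕ) : ℝ) ^ (-lam)) :=
    (summable_nat_add_iff k).2 (Real.summable_nat_rpow.2 (by linarith))
  rw [aux_lintegral_nat μ (g := fun ω => Y ω - k) (hY.sub measurable_const)]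
  have hset : ∀ j : ℕ, {ω | j < Y ω - k} = {ω | j + k < Y ω} := by
    intro j; ext ω; simp [lt_tsub_iff_right]
  calc ∑' j : ℕ, μ {ω | j < Y ω - k}
      ≤ ∑' j : ℕ, ENNReal.ofReal (c * ((j + k : ℕ) : ℝ) ^ (-lam)) := by
        refine ENNReal.tsum_le_tsum fun j => ?_
        rw [hset j]
        refine (ENNReal.le_ofReal_iff_toReal_le (measure_ne_top μ _) ?_).2
          (htail _ (le_trans hk (Nat.le_add_left _ _)))
        positivity
    _ = ENNReal.ofReal (∑' j : ℕ, c * ((j + k : ℕ) : ℝ) ^ (-lam)) :=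
        (ENNReal.ofReal_tsum_of_nonneg (fun j => by positivity) (hsum.mul_left c)).symm
    _ ≤ ENNReal.ofReal (c * ((k : ℝ) ^ (-lam) + (k : ℝ) ^ (1 - lam) / (lam - 1))) := by
        refine ENNReal.ofReal_le_ofReal ?_
        rw [tsum_mul_left]
        exact mul_le_mul_of_nonneg_left (aux_tail_sum hlam hk) hc

set_option maxHeartbeats 1000000 in
/-- If `X_1, …, X_n` are i.i.d. positive-integer valued random
variables with `P(X_1 > x) ≤ c·x^{-λ}` for every integer `x ≥ 1` (`c > 1`, `λ > 1`),
then `E[2n·log₂(2·max(X_1,…,X_n)/n + 1)] ≤ 26·c·n^{1/λ}/min(λ − 1, 1)`. -/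
theorem expected_ell_max_power_law
    {Ω : Type*} [MeasurableSpace Ω] (μ : Measure Ω) [IsProbabilityMeasure μ]
    (n : ℕ) (hn : 1 ≤ n) (c lam : ℝ) (hc : 1 < c) (hlam : 1 < lam)
    (X : Fin n → Ω → ℕ) (hmeas : ∀ i, Measurable (X i))
    (hindep : iIndepFun X μ)
    (hident : ∀ i, IdentDistrib (X i) (X ⟨0, hn⟩) μ μ)
    (hpos : ∀ i ω, 0 < X i ω)
    (htail : ∀ x : ℕ, 1 ≤ x → (μ {ω | x < X ⟨0, hn⟩ ω}).toReal ≤ c * (x : ℝ) ^ (-lam)) :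
    ∫ ω, 2 * (n : ℝ) * Real.logb 2
        (2 * ((Finset.univ.sup' (Finset.univ_nonempty_iff.mpr ⟨⟨0, hn⟩⟩)
          fun i => X i ω : ℕ) : ℝ) / n + 1) ∂μ
      ≤ 26 * c * (n : ℝ) ^ (1 / lam) / min (lam - 1) 1 := by
  classical
  set M : Ω → ℕ := fun ω => Finset.univ.sup' (Finset.univ_nonempty_iff.mpr ⟨⟨0, hn⟩⟩)
    (fun i => X i ω) with hM
  set Y : Ω → ℕ := X ⟨0, hn⟩ with hYdef
  have hYm : Measurable Y := hmeas _
  have hMm : Measurable M := by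
    have : M = Finset.univ.sup' (Finset.univ_nonempty_iff.mpr ⟨⟨0, hn⟩⟩) X := by
      funext ω; rw [hM]; simp [Finset.sup'_apply]
    rw [this]
    exact Finset.measurable_sup' _ (fun i _ => hmeas i)
  have hn0 : (0:ℝ) < n := by exact_mod_cast hn
  have hn1 : (1:ℝ) ≤ n := by exact_mod_cast hn
  have hc0 : (0:ℝ) < c := by linarith
  have hlam0 : (0:ℝ) < lam := by linarith
  have hlog2 : (0:ℝ) < Real.log 2 := Real.log_pos (by norm_num)
  -- constants
  set T : ℝ := ((n : ℝ) * c) ^ (1 / lam) with hT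
  have hT1 : 1 ≤ T := Real.one_le_rpow (by nlinarith) (by positivity)
  set k : ℕ := ⌈T⌉₊ with hk
  have hk1 : 1 ≤ k := Nat.one_le_ceil_iff.2 (by linarith)
  have hkT : T ≤ (k : ℝ) := Nat.le_ceil T
  have hkT1 : (k : ℝ) ≤ T + 1 := (Nat.ceil_lt_add_one (by linarith)).le
  -- pointwise nat bound
  have hMle : ∀ ω, M ω ≤ k + ∑ i, (X i ω - k) := by
    intro ω
    obtain ⟨j, -, hj⟩ := Finset.exists_mem_eq_sup'
      (Finset.univ_nonempty_iff.mpr ⟨⟨0, hn⟩⟩) (fun i => X i ω)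
    rw [hM]
    simp only []
    rw [hj]
    calc X j ω ≤ k + (X j ω - k) := le_add_tsub
      _ ≤ k + ∑ i, (X i ω - k) := add_le_add_right
          (Finset.single_le_sum (f := fun i => X i ω - k)
            (fun i _ => Nat.zero_le _) (Finset.mem_univ j)) k
  -- the integrand
  set f : Ω → ℝ := fun ω => 2 * (n : ℝ) * Real.logb 2 (2 * ((M ω : ℕ) : ℝ) / n + 1) with hf
  have harg : ∀ ω, (0:ℝ) ≤ 2 * ((M ω : ℕ) : ℝ) / n := fun ω => by positivity
  have hf_nonneg : ∀ ω, 0 ≤ f ω := by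
    intro ω
    have := harg ω
    exact mul_nonneg (by positivity) (Real.logb_nonneg (by norm_num) (by linarith))
  have hfM : ∀ ω, f ω ≤ 4 / Real.log 2 * ((M ω : ℕ) : ℝ) := by
    intro ω
    have h1 : Real.log (2 * ((M ω : ℕ) : ℝ) / n + 1) ≤ 2 * ((M ω : ℕ) : ℝ) / n := by
      have := Real.log_le_sub_one_of_pos (show (0:ℝ) < 2 * ((M ω : ℕ) : ℝ) / n + 1 by
        have := harg ω; linarith)
      linarith
    rw [hf]
    simp only [Real.logb]
    calc 2 * (n : ℝ) * (Real.log (2 * ((M ω : ℕ) : ℝ) / n + 1) / Real.log 2)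
        ≤ 2 * (n : ℝ) * ((2 * ((M ω : ℕ) : ℝ) / n) / Real.log 2) := by
          have h2 : (0:ℝ) ≤ 2 * (n:ℝ) := by positivity
          exact mul_le_mul_of_nonneg_left (by gcongr) h2
      _ = 4 / Real.log 2 * ((M ω : ℕ) : ℝ) := by field_simp; ring
  have hfmeas : Measurable f := by
    apply Measurable.mul measurable_const
    have h1 : Measurable fun ω => 2 * ((M ω : ℕ) : ℝ) / n + 1 :=
      (((measurable_from_nat.comp hMm : Measurable fun ω => ((M ω : ℕ) : ℝ)).const_mul
        2).div_const _).add_const 1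
    exact (Real.measurable_log.comp h1).div_const _
  -- main chain
  have hm : (0:ℝ) < min (lam - 1) 1 := lt_min (by linarith) one_pos
  have hRHS : (0:ℝ) ≤ 26 * c * (n : ℝ) ^ (1 / lam) / min (lam - 1) 1 := by positivity
  rw [show (∫ ω, 2 * (n : ℝ) * Real.logb 2
        (2 * ((Finset.univ.sup' (Finset.univ_nonempty_iff.mpr ⟨⟨0, hn⟩⟩)
          fun i => X i ω : ℕ) : ℝ) / n + 1) ∂μ) = ∫ ω, f ω ∂μ from rfl]
  rw [integral_eq_lintegral_of_nonneg_ae (Filter.Eventually.of_forall hf_nonneg)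
    hfmeas.aestronglyMeasurable]
  refine ENNReal.toReal_le_of_le_ofReal hRHS ?_
  -- ENNReal chain
  have hMcast : Measurable fun ω => ((M ω : ℕ) : ℝ≥0∞) := measurable_from_nat.comp hMm
  have step1 : ∫⁻ ω, ENNReal.ofReal (f ω) ∂μ
      ≤ ENNReal.ofReal (4 / Real.log 2) * ∫⁻ ω, ((M ω : ℕ) : ℝ≥0∞) ∂μ := by
    rw [← lintegral_const_mul _ hMcast]
    refine lintegral_mono fun ω => ?_
    calc ENNReal.ofReal (f ω) ≤ ENNReal.ofReal (4 / Real.log 2 * ((M ω : ℕ) : ℝ)) :=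
          ENNReal.ofReal_le_ofReal (hfM ω)
      _ = ENNReal.ofReal (4 / Real.log 2) * ((M ω : ℕ) : ℝ≥0∞) := by
          rw [ENNReal.ofReal_mul (by positivity), ENNReal.ofReal_natCast]
  have step2 : ∫⁻ ω, ((M ω : ℕ) : ℝ≥0∞) ∂μ
      ≤ (k : ℝ≥0∞) + n * ∫⁻ ω, ((Y ω - k : ℕ) : ℝ≥0∞) ∂μ := by
    have hsub : ∀ i : Fin n, Measurable fun ω => ((X i ω - k : ℕ) : ℝ≥0∞) :=
      fun i => measurable_from_nat.comp ((hmeas i).sub measurable_const)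
    calc ∫⁻ ω, ((M ω : ℕ) : ℝ≥0∞) ∂μ
        ≤ ∫⁻ ω, ((k : ℝ≥0∞) + ∑ i, ((X i ω - k : ℕ) : ℝ≥0∞)) ∂μ := by
          refine lintegral_mono fun ω => ?_
          have h1 : ((M ω : ℕ) : ℝ≥0∞) ≤ ((k + ∑ i, (X i ω - k) : ℕ) : ℝ≥0∞) :=
            Nat.cast_le.2 (hMle ω)
          refine le_trans h1 (le_of_eq ?_)
          push_cast
          rfl
      _ = (k : ℝ≥0∞) + ∑ i, ∫⁻ ω, ((X i ω - k : ℕ) : ℝ≥0∞) ∂μ := by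
          rw [lintegral_add_left measurable_const, lintegral_const, measure_univ, mul_one,
            lintegral_finset_sum _ (fun i _ => hsub i)]
      _ = (k : ℝ≥0∞) + n * ∫⁻ ω, ((Y ω - k : ℕ) : ℝ≥0∞) ∂μ := by
          congr 1
          have heq : ∀ i : Fin n, ∫⁻ ω, ((X i ω - k : ℕ) : ℝ≥0∞) ∂μ
              = ∫⁻ ω, ((Y ω - k : ℕ) : ℝ≥0∞) ∂μ := by
            intro i
            exact ((hident i).comp
              (measurable_from_nat (f := fun m : ℕ => ((m - k : ℕ) : ℝ≥0∞)))).lintegral_eq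
          rw [Finset.sum_congr rfl (fun i _ => heq i), Finset.sum_const, Finset.card_univ,
            Fintype.card_fin, nsmul_eq_mul]
  have step3 : ∫⁻ ω, ((Y ω - k : ℕ) : ℝ≥0∞) ∂μ
      ≤ ENNReal.ofReal (c * ((k : ℝ) ^ (-lam) + (k : ℝ) ^ (1 - lam) / (lam - 1))) :=
    aux_trunc μ Y hYm c lam hc0.le hlam htail k hk1
  -- real arithmetic
  set A : ℝ := c * ((k : ℝ) ^ (-lam) + (k : ℝ) ^ (1 - lam) / (lam - 1)) with hA
  have hApos : 0 ≤ A := by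
    have : (0:ℝ) ≤ (k : ℝ) ^ (1 - lam) / (lam - 1) :=
      div_nonneg (Real.rpow_nonneg (by positivity) _) (by linarith)
    have h2 : (0:ℝ) ≤ (k : ℝ) ^ (-lam) := Real.rpow_nonneg (by positivity) _
    positivity
  have hnc : (0:ℝ) < (n : ℝ) * c := by positivity
  have hTpos : (0:ℝ) < T := by linarith
  have e1 : (n : ℝ) * c * T ^ (-lam) = 1 := by
    rw [hT, ← Real.rpow_mul hnc.le, show 1 / lam * (-lam) = (-1 : ℝ) by field_simp,
      Real.rpow_neg_one]
    field_simp
  have e2 : (n : ℝ) * c * T ^ (1 - lam) = T := by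
    rw [hT, ← Real.rpow_mul hnc.le]
    have h3 : ((n : ℝ) * c) * ((n : ℝ) * c) ^ (1 / lam * (1 - lam))
        = ((n : ℝ) * c) ^ (1 + 1 / lam * (1 - lam)) := by
      rw [Real.rpow_add hnc, Real.rpow_one]
    rw [h3, show 1 + 1 / lam * (1 - lam) = 1 / lam by field_simp; ring]
  have hklam : (k : ℝ) ^ (-lam) ≤ T ^ (-lam) :=
    Real.rpow_le_rpow_of_nonpos hTpos hkT (by linarith)
  have hklam2 : (k : ℝ) ^ (1 - lam) ≤ T ^ (1 - lam) :=
    Real.rpow_le_rpow_of_nonpos hTpos hkT (by linarith)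
  have hnA : (n : ℝ) * A ≤ 1 + T / (lam - 1) := by
    rw [hA, show (n : ℝ) * (c * ((k : ℝ) ^ (-lam) + (k : ℝ) ^ (1 - lam) / (lam - 1)))
      = (n : ℝ) * c * (k : ℝ) ^ (-lam) + ((n : ℝ) * c * (k : ℝ) ^ (1 - lam)) / (lam - 1)
      by ring]
    have l1 : (n : ℝ) * c * (k : ℝ) ^ (-lam) ≤ 1 := by
      calc (n : ℝ) * c * (k : ℝ) ^ (-lam) ≤ (n : ℝ) * c * T ^ (-lam) :=
            mul_le_mul_of_nonneg_left hklam (by positivity)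
        _ = 1 := e1
    have l2 : ((n : ℝ) * c * (k : ℝ) ^ (1 - lam)) / (lam - 1) ≤ T / (lam - 1) := by
      apply div_le_div_of_nonneg_right ?_ (by linarith)
      calc (n : ℝ) * c * (k : ℝ) ^ (1 - lam) ≤ (n : ℝ) * c * T ^ (1 - lam) :=
            mul_le_mul_of_nonneg_left hklam2 (by positivity)
        _ = T := e2
    linarith
  set S : ℝ := c * (n : ℝ) ^ (1 / lam) with hSdef
  have hS : T ≤ S := by
    rw [hT, hSdef, mul_comm (n : ℝ) c, Real.mul_rpow hc0.le (by positivity)]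
    have h4 : c ^ (1 / lam) ≤ c := by
      calc c ^ (1 / lam) ≤ c ^ (1 : ℝ) :=
            Real.rpow_le_rpow_of_exponent_le hc.le (by rw [div_le_one hlam0]; linarith)
        _ = c := Real.rpow_one c
    exact mul_le_mul_of_nonneg_right h4 (by positivity)
  have hS1 : (1:ℝ) ≤ S := by
    have h5 : (1:ℝ) ≤ (n : ℝ) ^ (1 / lam) := Real.one_le_rpow hn1 (by positivity)
    nlinarith
  have hkey : (k : ℝ) + n * A ≤ 4 * S / min (lam - 1) 1 := by
    rw [le_div_iff₀ hm]
    have hd0 : (0:ℝ) ≤ T / (lam - 1) := div_nonneg (by linarith) (by linarith)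
    have hdm : T / (lam - 1) * (lam - 1) = T := div_mul_cancel₀ T (by linarith)
    have hm1 : min (lam - 1) 1 ≤ 1 := min_le_right _ _
    have hm2 : min (lam - 1) 1 ≤ lam - 1 := min_le_left _ _
    have hsum : (k : ℝ) + n * A ≤ T + 2 + T / (lam - 1) := by linarith
    have h6 : ((k : ℝ) + n * A) * min (lam - 1) 1
        ≤ (T + 2 + T / (lam - 1)) * min (lam - 1) 1 :=
      mul_le_mul_of_nonneg_right hsum hm.le
    have h7 : (T + 2 + T / (lam - 1)) * min (lam - 1) 1 ≤ 4 * S := by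
      have h8 : (T + 2) * min (lam - 1) 1 ≤ T + 2 :=
        mul_le_of_le_one_right (by linarith) hm1
      have h9 : T / (lam - 1) * min (lam - 1) 1 ≤ T :=
        (mul_le_mul_of_nonneg_left hm2 hd0).trans_eq hdm
      have hexp : (T + 2 + T / (lam - 1)) * min (lam - 1) 1
          = (T + 2) * min (lam - 1) 1 + T / (lam - 1) * min (lam - 1) 1 := by ring
      rw [hexp]
      linarith
    linarith
  have hfinal : 4 / Real.log 2 * ((k : ℝ) + (n : ℝ) * A)
      ≤ 26 * c * (n : ℝ) ^ (1 / lam) / min (lam - 1) 1 := by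
    have h10 : 4 / Real.log 2 * ((k : ℝ) + (n : ℝ) * A)
        ≤ 4 / Real.log 2 * (4 * S / min (lam - 1) 1) :=
      mul_le_mul_of_nonneg_left hkey (by positivity)
    have h16 : 4 / Real.log 2 * 4 ≤ 26 := by
      rw [div_mul_eq_mul_div, div_le_iff₀ hlog2]
      linarith [Real.log_two_gt_d9]
    have h11 : 4 / Real.log 2 * (4 * S / min (lam - 1) 1)
        = (4 / Real.log 2 * 4) * (S / min (lam - 1) 1) := by ring
    have h12 : (4 / Real.log 2 * 4) * (S / min (lam - 1) 1)
        ≤ 26 * (S / min (lam - 1) 1) :=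
      mul_le_mul_of_nonneg_right h16 (by positivity)
    have h13 : 26 * (S / min (lam - 1) 1) = 26 * c * (n : ℝ) ^ (1 / lam) / min (lam - 1) 1 := by
      rw [hSdef]; ring
    linarith
  -- assemble
  calc ∫⁻ ω, ENNReal.ofReal (f ω) ∂μ
      ≤ ENNReal.ofReal (4 / Real.log 2) * ∫⁻ ω, ((M ω : ℕ) : ℝ≥0∞) ∂μ := step1
    _ ≤ ENNReal.ofReal (4 / Real.log 2) * ((k : ℝ≥0∞) + n * ENNReal.ofReal A) := by
        refine mul_le_mul_right (step2.trans ?_) _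
        exact add_le_add_right (mul_le_mul_right step3 _) _
    _ = ENNReal.ofReal (4 / Real.log 2 * ((k : ℝ) + (n : ℝ) * A)) := by
        have hofReal : ENNReal.ofReal ((k : ℝ) + (n : ℝ) * A)
            = (k : ℝ≥0∞) + (n : ℝ≥0∞) * ENNReal.ofReal A := by
          rw [ENNReal.ofReal_add (by positivity) (mul_nonneg (by positivity) hApos),
            ENNReal.ofReal_natCast, ENNReal.ofReal_mul (by positivity),
            ENNReal.ofReal_natCast]
        rw [ENNReal.ofReal_mul (by positivity : (0:ℝ) ≤ 4 / Real.log 2), hofReal]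
    _ ≤ ENNReal.ofReal (26 * c * (n : ℝ) ^ (1 / lam) / min (lam - 1) 1) :=
        ENNReal.ofReal_le_ofReal hfinal
end

section
/- Let c > 1 and λ > 1 be reals and n ≥ 1 an integer. Let t₀ = (c·(λ+1))^(1/λ) and define f* : [0,∞) → ℝ by f*(x) = c·λ·t₀^(−λ−1) for x ≤ t₀ and f*(x) = c·λ·x^(−λ−1) for x > t₀. Then ∫₀^∞ 92·√(n·f*(x))·log₂(√(n·f*(x)) + 1) dx ≤ 276·(c·(λ+1))^(1/λ)·√n·log₂(√n + 1)/min(λ − 1, 1). -/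
open MeasureTheory

lemma fstar_aux_key {lam : ℝ} (hlam : 1 < lam) :
    92 * (1 + 2 / (lam - 1)) ≤ 276 / min (lam - 1) 1 := by
  have hl1 : (0:ℝ) < lam - 1 := by linarith
  have hfrac : (1 + 2 / (lam - 1)) * (lam - 1) = lam + 1 := by
    field_simp
    ring
  rcases min_cases (lam - 1) 1 with ⟨hmeq, hmle⟩ | ⟨hmeq, hmle⟩ <;> rw [hmeq]
  · rw [le_div_iff₀ hl1]
    nlinarith [hfrac, hmle]
  · have h2 : 2 / (lam - 1) ≤ 2 := by
      rw [div_le_iff₀ hl1]; nlinarith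
    norm_num
    linarith

/-- For the comparison density `f*`,
`∫₀^∞ 92·√(n·f*(x))·log₂(√(n·f*(x)) + 1) dx
  ≤ 276·(c·(λ+1))^{1/λ}·√n·log₂(√n + 1)/min(λ − 1, 1)`. -/
theorem fstar_integral_bound
    (c lam : ℝ) (hc : 1 < c) (hlam : 1 < lam) (n : ℕ) (hn : 1 ≤ n) :
    ∫ x in Set.Ioi (0 : ℝ),
        92 * Real.sqrt (n * fstar c lam x)
          * Real.logb 2 (Real.sqrt (n * fstar c lam x) + 1)
      ≤ 276 * (c * (lam + 1)) ^ (1 / lam) * Real.sqrt n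
          * Real.logb 2 (Real.sqrt n + 1) / min (lam - 1) 1 := by
  have hc0 : (0:ℝ) < c := by linarith
  have hl0 : (0:ℝ) < lam := by linarith
  have hcl1 : (1:ℝ) < c * (lam + 1) := by nlinarith
  have hcl0 : (0:ℝ) < c * (lam + 1) := by linarith
  set t : ℝ := (c * (lam + 1)) ^ (1 / lam) with ht_def
  have ht1 : 1 < t :=
    (Real.one_lt_rpow_iff_of_pos hcl0).mpr (Or.inl ⟨hcl1, by positivity⟩)
  have ht0 : 0 < t := lt_trans one_pos ht1
  have htlam : t ^ lam = c * (lam + 1) := by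
    rw [ht_def, ← Real.rpow_mul hcl0.le, one_div_mul_cancel (ne_of_gt hl0), Real.rpow_one]
  set f0 : ℝ := c * lam * t ^ (-lam - 1) with hf0_def
  have hf0_pos : 0 < f0 := by positivity
  have hf0_le : f0 ≤ 1 := by
    have h1 : c * lam ≤ t ^ lam := by rw [htlam]; nlinarith
    have h2 : f0 ≤ t ^ lam * t ^ (-lam - 1) :=
      mul_le_mul_of_nonneg_right h1 (Real.rpow_nonneg ht0.le _)
    have h3 : t ^ lam * t ^ (-lam - 1) = t ^ (-1 : ℝ) := by
      rw [← Real.rpow_add ht0]; ring_nf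
    have h4 : t ^ (-1 : ℝ) ≤ 1 :=
      Real.rpow_le_one_of_one_le_of_nonpos ht1.le (by norm_num)
    linarith [h3 ▸ h2]
  -- fstar facts
  have hfs_eq_const : ∀ x : ℝ, x ≤ t → fstar c lam x = f0 := by
    intro x hx
    rw [fstar, ← ht_def, if_pos hx]
  have hfs_eq_tail : ∀ x : ℝ, t < x → fstar c lam x = c * lam * x ^ (-lam - 1) := by
    intro x hx
    rw [fstar, ← ht_def, if_neg (not_le.mpr hx)]
  have hfs_nonneg : ∀ x : ℝ, 0 ≤ fstar c lam x := by
    intro x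
    rcases le_or_gt x t with hx | hx
    · rw [hfs_eq_const x hx]; exact hf0_pos.le
    · rw [hfs_eq_tail x hx]
      have : (0:ℝ) < x := lt_trans ht0 hx
      positivity
  have hfs_le_one : ∀ x : ℝ, fstar c lam x ≤ 1 := by
    intro x
    rcases le_or_gt x t with hx | hx
    · rw [hfs_eq_const x hx]; exact hf0_le
    · rw [hfs_eq_tail x hx]
      have h1 : x ^ (-lam - 1) ≤ t ^ (-lam - 1) :=
        Real.rpow_le_rpow_of_nonpos ht0 hx.le (by linarith)
      have h2 : c * lam * x ^ (-lam - 1) ≤ f0 :=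
        mul_le_mul_of_nonneg_left h1 (by positivity)
      linarith
  -- abbreviations
  set L : ℝ := Real.logb 2 (Real.sqrt n + 1) with hL_def
  have hsqrtn1 : (1:ℝ) ≤ Real.sqrt n := by
    rw [show (1:ℝ) = Real.sqrt 1 from (Real.sqrt_one).symm]
    exact Real.sqrt_le_sqrt (by exact_mod_cast hn)
  have hL0 : 0 ≤ L := Real.logb_nonneg one_lt_two (by linarith)
  set a : ℝ := (-lam - 1) / 2 with ha_def
  have ha : a < -1 := by rw [ha_def]; linarith
  have sqrt_rpow : ∀ x e : ℝ, 0 ≤ x → Real.sqrt (x ^ e) = x ^ (e / 2) := by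
    intro x e hx
    rw [Real.sqrt_eq_rpow, ← Real.rpow_mul hx]
    congr 1
    ring
  set s : ℝ := Real.sqrt f0 with hs_def
  have hs1 : s ≤ 1 := Real.sqrt_le_one.mpr hf0_le
  have hs0 : 0 ≤ s := Real.sqrt_nonneg _
  -- integrability of √(fstar) on (0, ∞)
  have htail_eq : ∀ x ∈ Set.Ioi t, Real.sqrt (fstar c lam x)
      = Real.sqrt (c * lam) * x ^ a := by
    intro x hx
    have hx' : t < x := hx
    have hx0 : (0:ℝ) ≤ x := (lt_trans ht0 hx').le
    rw [hfs_eq_tail x hx', Real.sqrt_mul (by positivity), sqrt_rpow x _ hx0]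
  have hconst_eq : ∀ x ∈ Set.Ioc (0:ℝ) t, Real.sqrt (fstar c lam x) = s := by
    intro x hx
    rw [hfs_eq_const x hx.2]
  have hInt1 : IntegrableOn (fun x => Real.sqrt (fstar c lam x)) (Set.Ioc 0 t) := by
    have : IntegrableOn (fun _ : ℝ => s) (Set.Ioc 0 t) :=
      integrableOn_const measure_Ioc_lt_top.ne
    exact this.congr_fun (fun x hx => (hconst_eq x hx).symm) measurableSet_Ioc
  have hInt2 : IntegrableOn (fun x => Real.sqrt (fstar c lam x)) (Set.Ioi t) := by
    have h1 : IntegrableOn (fun x : ℝ => x ^ a) (Set.Ioi t) :=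
      integrableOn_Ioi_rpow_of_lt ha ht0
    have h2 : IntegrableOn (fun x : ℝ => Real.sqrt (c * lam) * x ^ a) (Set.Ioi t) :=
      h1.const_mul _
    exact h2.congr_fun (fun x hx => (htail_eq x hx).symm) measurableSet_Ioi
  have hUnion : Set.Ioc (0:ℝ) t ∪ Set.Ioi t = Set.Ioi 0 := Set.Ioc_union_Ioi_eq_Ioi ht0.le
  have hInt : IntegrableOn (fun x => Real.sqrt (fstar c lam x)) (Set.Ioi 0) := by
    rw [← hUnion]; exact hInt1.union hInt2
  -- value of the integral of √fstar
  have hsval : s = Real.sqrt (c * lam) * t ^ a := by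
    rw [hs_def, hf0_def,
      Real.sqrt_mul (show (0:ℝ) ≤ c * lam by positivity) (t ^ (-lam - 1)),
      sqrt_rpow t _ ht0.le]
  have hI1 : ∫ x in Set.Ioc (0:ℝ) t, Real.sqrt (fstar c lam x) = s * t := by
    rw [setIntegral_congr_fun measurableSet_Ioc hconst_eq, setIntegral_const, measureReal_def, Real.volume_Ioc,
      smul_eq_mul]
    rw [ENNReal.toReal_ofReal (by linarith)]
    ring
  have hI2 : ∫ x in Set.Ioi t, Real.sqrt (fstar c lam x)
      = Real.sqrt (c * lam) * (-t ^ (a + 1) / (a + 1)) := by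
    rw [setIntegral_congr_fun measurableSet_Ioi htail_eq, integral_const_mul,
      integral_Ioi_rpow_of_lt ha ht0]
  have hI2' : ∫ x in Set.Ioi t, Real.sqrt (fstar c lam x) = s * t * (2 / (lam - 1)) := by
    rw [hI2]
    have h1 : t ^ (a + 1) = t ^ a * t := by
      rw [Real.rpow_add ht0, Real.rpow_one]
    have h2 : a + 1 = (1 - lam) / 2 := by rw [ha_def]; ring
    rw [h1, h2, hsval]
    have h3 : lam - 1 ≠ 0 := by linarith
    have h4 : (1:ℝ) - lam ≠ 0 := by linarith
    field_simp
    ring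
  have hIval : ∫ x in Set.Ioi (0:ℝ), Real.sqrt (fstar c lam x)
      = s * t * (1 + 2 / (lam - 1)) := by
    rw [← hUnion, setIntegral_union (Set.Ioc_disjoint_Ioi le_rfl) measurableSet_Ioi hInt1 hInt2,
      hI1, hI2']
    ring
  -- pointwise bound of the integrand
  set K : ℝ := 92 * Real.sqrt n * L with hK_def
  have hK0 : 0 ≤ K := by positivity
  have hbound : ∀ x : ℝ,
      92 * Real.sqrt (n * fstar c lam x) * Real.logb 2 (Real.sqrt (n * fstar c lam x) + 1)
        ≤ K * Real.sqrt (fstar c lam x) := by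
    intro x
    have hf := hfs_nonneg x
    have hsplit : Real.sqrt (n * fstar c lam x) = Real.sqrt n * Real.sqrt (fstar c lam x) :=
      Real.sqrt_mul (Nat.cast_nonneg n) _
    have hle : Real.sqrt (n * fstar c lam x) ≤ Real.sqrt n := by
      have h5 : (n : ℝ) * fstar c lam x ≤ n := by
        have := hfs_le_one x
        nlinarith [Nat.cast_nonneg (α := ℝ) n]
      simpa using Real.sqrt_le_sqrt h5
    have hlog : Real.logb 2 (Real.sqrt (n * fstar c lam x) + 1) ≤ L := by
      rw [hL_def]
      exact Real.logb_le_logb_of_le one_lt_two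
        (by positivity) (by linarith)
    have hnn : 0 ≤ 92 * Real.sqrt (n * fstar c lam x) := by positivity
    calc 92 * Real.sqrt (n * fstar c lam x) * Real.logb 2 (Real.sqrt (n * fstar c lam x) + 1)
        ≤ 92 * Real.sqrt (n * fstar c lam x) * L := mul_le_mul_of_nonneg_left hlog hnn
      _ = 92 * (Real.sqrt n * Real.sqrt (fstar c lam x)) * L := by rw [hsplit]
      _ = K * Real.sqrt (fstar c lam x) := by rw [hK_def]; ring
  have hnonneg : ∀ x : ℝ,
      0 ≤ 92 * Real.sqrt (n * fstar c lam x)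
        * Real.logb 2 (Real.sqrt (n * fstar c lam x) + 1) := by
    intro x
    have h1 : 0 ≤ Real.logb 2 (Real.sqrt (n * fstar c lam x) + 1) :=
      Real.logb_nonneg one_lt_two
        (by nlinarith [Real.sqrt_nonneg ((n:ℝ) * fstar c lam x)])
    positivity
  -- compare the integrals
  have hIntK : IntegrableOn (fun x => K * Real.sqrt (fstar c lam x)) (Set.Ioi 0) :=
    hInt.const_mul K
  have hmain : ∫ x in Set.Ioi (0:ℝ),
      92 * Real.sqrt (n * fstar c lam x) * Real.logb 2 (Real.sqrt (n * fstar c lam x) + 1)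
      ≤ ∫ x in Set.Ioi (0:ℝ), K * Real.sqrt (fstar c lam x) := by
    apply integral_mono_of_nonneg
    · exact Filter.Eventually.of_forall hnonneg
    · exact hIntK
    · exact Filter.Eventually.of_forall hbound
  have hKint : ∫ x in Set.Ioi (0:ℝ), K * Real.sqrt (fstar c lam x)
      = K * (s * t * (1 + 2 / (lam - 1))) := by
    rw [integral_const_mul, hIval]
  -- final arithmetic
  have hm0 : 0 < min (lam - 1) 1 := lt_min (by linarith) one_pos
  have hfinal : K * (s * t * (1 + 2 / (lam - 1)))
      ≤ 276 * t * Real.sqrt n * L / min (lam - 1) 1 := by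
    have hkey : 92 * (1 + 2 / (lam - 1)) ≤ 276 / min (lam - 1) 1 :=
      fstar_aux_key hlam
    have hst : s * t ≤ t := mul_le_of_le_one_left ht0.le hs1
    have h1 : K * (s * t * (1 + 2 / (lam - 1))) ≤ K * (t * (1 + 2 / (lam - 1))) := by
      have h2 : 0 ≤ 1 + 2 / (lam - 1) :=
        add_nonneg one_pos.le (div_nonneg (by norm_num) (by linarith))
      have := mul_le_mul_of_nonneg_right hst h2
      exact mul_le_mul_of_nonneg_left this hK0
    have h3 : K * (t * (1 + 2 / (lam - 1)))
        ≤ 276 * t * Real.sqrt n * L / min (lam - 1) 1 := by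
      have hconv : K * (t * (1 + 2 / (lam - 1)))
          = (92 * (1 + 2 / (lam - 1))) * (t * (Real.sqrt n * L)) := by
        rw [hK_def]; ring
      have hconv2 : 276 * t * Real.sqrt n * L / min (lam - 1) 1
          = (276 / min (lam - 1) 1) * (t * (Real.sqrt n * L)) := by ring
      rw [hconv, hconv2]
      exact mul_le_mul_of_nonneg_right hkey (by positivity)
    linarith
  calc ∫ x in Set.Ioi (0:ℝ),
      92 * Real.sqrt (n * fstar c lam x) * Real.logb 2 (Real.sqrt (n * fstar c lam x) + 1)
      ≤ ∫ x in Set.Ioi (0:ℝ), K * Real.sqrt (fstar c lam x) := hmain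
    _ = K * (s * t * (1 + 2 / (lam - 1))) := hKint
    _ ≤ 276 * t * Real.sqrt n * L / min (lam - 1) 1 := hfinal
end
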